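/- arXiv:2002.09207 — 5 statements merged into one kernel-verified Lean document; each statement's English description precedes it below -/
import Mathlib

section
/- Let Ω ⊆ ℝ^d be open and connected, and let τ : Ω → ℝ^d be a C¹ map with components τ₁,…,τ_d satisfying ∇τ_j · ∇τ_j = 1 on Ω for each j and ∇τ_j · ∇τ_k = 0 on Ω for all j ≠ k. Then τ is the restriction to Ω of a Euclidean isometry of ℝ^d, i.e. there exist an orthogonal matrix Q and a vector b such that τ(x) = Qx + b for all x ∈ Ω. -/
open RealInnerProductSpace

set_option maxHeartbeats 1000000

section Aux

open Metric Module

variable {d : ℕ}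

local notation "E" => EuclideanSpace ℝ (Fin d)

/-- Locally constant on a preconnected set implies constant. -/
lemma aux_locConst {α : Type*} {X : Type*} [MetricSpace X] {Ω : Set X}
    (hconn : IsPreconnected Ω) (g : X → α)
    (h : ∀ x ∈ Ω, ∃ ε > 0, Metric.ball x ε ⊆ Ω ∧ ∀ y ∈ Metric.ball x ε, g y = g x)
    {x₀ : X} (hx₀ : x₀ ∈ Ω) : ∀ x ∈ Ω, g x = g x₀ := by
  choose! ε hε hsub hval using h
  by_contra hcon
  push_neg at hcon
  obtain ⟨x₁, hx₁, hne⟩ := hcon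
  set u : Set X := ⋃ x ∈ {x ∈ Ω | g x = g x₀}, ball x (ε x) with hu_def
  set v : Set X := ⋃ x ∈ {x ∈ Ω | g x ≠ g x₀}, ball x (ε x) with hv_def
  have hu : IsOpen u := isOpen_biUnion fun _ _ => isOpen_ball
  have hv : IsOpen v := isOpen_biUnion fun _ _ => isOpen_ball
  have hcover : Ω ⊆ u ∪ v := by
    intro x hx
    by_cases hgx : g x = g x₀
    · exact Or.inl (Set.mem_biUnion ⟨hx, hgx⟩ (mem_ball_self (hε x hx)))
    · exact Or.inr (Set.mem_biUnion ⟨hx, hgx⟩ (mem_ball_self (hε x hx)))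
  have h1 : (Ω ∩ u).Nonempty :=
    ⟨x₀, hx₀, Set.mem_biUnion ⟨hx₀, rfl⟩ (mem_ball_self (hε x₀ hx₀))⟩
  have h2 : (Ω ∩ v).Nonempty :=
    ⟨x₁, hx₁, Set.mem_biUnion ⟨hx₁, hne⟩ (mem_ball_self (hε x₁ hx₁))⟩
  obtain ⟨y, hyΩ, hyu, hyv⟩ := hconn u v hu hv hcover h1 h2
  obtain ⟨a, ⟨haΩ, hga⟩, hya⟩ := Set.mem_iUnion₂.1 hyu
  obtain ⟨b, ⟨hbΩ, hgb⟩, hyb⟩ := Set.mem_iUnion₂.1 hyv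
  exact hgb ((hval b hbΩ y hyb).symm.trans ((hval a haΩ y hya).trans hga))

/-- An orthonormal family of `d` vectors in `ℝ^d` (with `d > 0`) extends to an
orthonormal basis equal to it. -/
lemma aux_onb (hd : 0 < d) {v : Fin d → E} (hv : Orthonormal ℝ v) :
    ∃ b : OrthonormalBasis (Fin d) ℝ E, ∀ i, b i = v i := by
  haveI : Nonempty (Fin d) := ⟨⟨0, hd⟩⟩
  have card : Fintype.card (Fin d) = finrank ℝ E := by simp
  have hBcoe : ⇑(basisOfOrthonormalOfCardEqFinrank hv card) = v :=
    coe_basisOfOrthonormalOfCardEqFinrank hv card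
  have hsp : ⊤ ≤ Submodule.span ℝ (Set.range v) := by
    rw [← hBcoe]
    exact (basisOfOrthonormalOfCardEqFinrank hv card).span_eq.ge
  exact ⟨OrthonormalBasis.mk hv hsp, fun i => by
    simp [OrthonormalBasis.coe_mk]⟩

end Aux

/-- A C¹ map on a connected open set Ω ⊆ ℝ^d whose component gradients are
pointwise orthonormal is the restriction of a Euclidean isometry x ↦ Qx + b. -/
theorem stmt_3 {d : ℕ} (Ω : Set (EuclideanSpace ℝ (Fin d)))
    (hΩ : IsOpen Ω) (hconn : IsConnected Ω)
    (τ : EuclideanSpace ℝ (Fin d) → EuclideanSpace ℝ (Fin d))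
    (hC1 : ContDiffOn ℝ 1 τ Ω)
    (horth : ∀ x ∈ Ω, ∀ j k : Fin d,
      ⟪gradient (fun y => τ y j) x, gradient (fun y => τ y k) x⟫ =
        if j = k then (1 : ℝ) else 0) :
    ∃ (Q : EuclideanSpace ℝ (Fin d) ≃ₗᵢ[ℝ] EuclideanSpace ℝ (Fin d))
      (b : EuclideanSpace ℝ (Fin d)), ∀ x ∈ Ω, τ x = Q x + b := by
  classical
  rcases Nat.eq_zero_or_pos d with hd | hd
  · subst hd
    refine ⟨LinearIsometryEquiv.refl ℝ _, 0, fun x _ => ?_⟩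
    exact Subsingleton.elim _ _
  obtain ⟨x₀, hx₀⟩ := hconn.nonempty
  -- differentiability
  have hdiff : ∀ x ∈ Ω, HasFDerivAt τ (fderiv ℝ τ x) x := fun x hx =>
    (((hC1.differentiableOn one_ne_zero).differentiableAt (hΩ.mem_nhds hx))).hasFDerivAt
  -- gradients vs fderiv
  have hgrad : ∀ x ∈ Ω, ∀ j : Fin d, ∀ v : EuclideanSpace ℝ (Fin d),
      ⟪gradient (fun y => τ y j) x, v⟫ = fderiv ℝ τ x v j := by
    intro x hx j v
    have hj : HasFDerivAt (fun y => τ y j)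
        ((EuclideanSpace.proj j : EuclideanSpace ℝ (Fin d) →L[ℝ] ℝ).comp (fderiv ℝ τ x)) x :=
      (EuclideanSpace.proj j : EuclideanSpace ℝ (Fin d) →L[ℝ] ℝ).hasFDerivAt.comp x (hdiff x hx)
    have hg := hj.hasGradientAt.gradient
    rw [hg]
    rw [InnerProductSpace.toDual_symm_apply]
    rfl
  -- isometric derivative
  have hiso : ∀ x ∈ Ω, ∀ v : EuclideanSpace ℝ (Fin d), ‖fderiv ℝ τ x v‖ = ‖v‖ := by
    intro x hx v
    have hon : Orthonormal ℝ (fun j : Fin d => gradient (fun y => τ y j) x) :=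
      orthonormal_iff_ite.mpr (horth x hx)
    obtain ⟨b, hb⟩ := aux_onb hd hon
    have : fderiv ℝ τ x v = b.repr v := by
      ext j
      rw [b.repr_apply_apply, hb j, hgrad x hx j v]
    rw [this, LinearIsometryEquiv.norm_map]
  have hle1 : ∀ x ∈ Ω, ‖fderiv ℝ τ x‖ ≤ 1 := fun x hx =>
    ContinuousLinearMap.opNorm_le_bound _ zero_le_one fun v => by
      rw [hiso x hx v, one_mul]
  -- continuous linear equiv version of the derivative
  have hequiv : ∀ x ∈ Ω, ∃ A : EuclideanSpace ℝ (Fin d) ≃L[ℝ] EuclideanSpace ℝ (Fin d), (A : EuclideanSpace ℝ (Fin d) →L[ℝ] EuclideanSpace ℝ (Fin d)) = fderiv ℝ τ x := by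
    intro x hx
    have hfr : Module.finrank ℝ (EuclideanSpace ℝ (Fin d)) = Module.finrank ℝ (EuclideanSpace ℝ (Fin d)) := rfl
    let li : EuclideanSpace ℝ (Fin d) →ₗᵢ[ℝ] EuclideanSpace ℝ (Fin d) := ⟨(fderiv ℝ τ x : EuclideanSpace ℝ (Fin d) →ₗ[ℝ] EuclideanSpace ℝ (Fin d)), hiso x hx⟩
    refine ⟨(li.toLinearIsometryEquiv hfr).toContinuousLinearEquiv, ?_⟩
    apply ContinuousLinearMap.ext
    intro v
    show (li.toLinearIsometryEquiv hfr) v = fderiv ℝ τ x v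
    exact li.toLinearIsometryEquiv_apply hfr v
  -- local distance preservation
  have hlocIso : ∀ c ∈ Ω, ∃ r > 0, Metric.ball c r ⊆ Ω ∧
      ∀ x ∈ Metric.ball c r, ∀ y ∈ Metric.ball c r, ‖τ x - τ y‖ = ‖x - y‖ := by
    intro c hc
    obtain ⟨A, hA⟩ := hequiv c hc
    have hstrict : HasStrictFDerivAt τ (A : EuclideanSpace ℝ (Fin d) →L[ℝ] EuclideanSpace ℝ (Fin d)) c := by
      rw [hA]
      exact (hC1.contDiffAt (hΩ.mem_nhds hc)).hasStrictFDerivAt one_ne_zero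
    set φ := hstrict.toOpenPartialHomeomorph τ with hφ
    have hφcoe : ⇑φ = τ := hstrict.toOpenPartialHomeomorph_coe
    have hsrc : c ∈ φ.source := hstrict.mem_toOpenPartialHomeomorph_source
    have hT : IsOpen (φ.target ∩ φ.symm ⁻¹' Ω) := φ.isOpen_inter_preimage_symm hΩ
    have hτcT : τ c ∈ φ.target ∩ φ.symm ⁻¹' Ω := by
      have h1 : τ c ∈ φ.target := by
        rw [← hφcoe]; exact φ.map_source hsrc
      refine ⟨h1, ?_⟩
      have : φ.symm (τ c) = c := by
        rw [← hφcoe]; exact φ.left_inv hsrc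
      simpa [this] using hc
    obtain ⟨δ, hδ, hδsub⟩ := Metric.isOpen_iff.1 hT (τ c) hτcT
    -- the inverse is 1-Lipschitz on ball (τ c) δ
    have hsymm_deriv : ∀ a ∈ Metric.ball (τ c) δ,
        ∃ B : EuclideanSpace ℝ (Fin d) →L[ℝ] EuclideanSpace ℝ (Fin d), HasFDerivAt φ.symm B a ∧ ‖B‖ ≤ 1 := by
      intro a ha
      have haT := hδsub ha
      have hyΩ : φ.symm a ∈ Ω := haT.2
      obtain ⟨Ay, hAy⟩ := hequiv (φ.symm a) hyΩ
      have hder : HasFDerivAt φ (Ay : EuclideanSpace ℝ (Fin d) →L[ℝ] EuclideanSpace ℝ (Fin d)) (φ.symm a) := by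
        rw [hφcoe, hAy]
        exact hdiff _ hyΩ
      refine ⟨(Ay.symm : EuclideanSpace ℝ (Fin d) →L[ℝ] EuclideanSpace ℝ (Fin d)), φ.hasFDerivAt_symm haT.1 hder, ?_⟩
      refine ContinuousLinearMap.opNorm_le_bound _ zero_le_one fun w => ?_
      have : ‖fderiv ℝ τ (φ.symm a) (Ay.symm w)‖ = ‖Ay.symm w‖ := hiso _ hyΩ _
      rw [← hAy] at this
      have h2 : (Ay : EuclideanSpace ℝ (Fin d) →L[ℝ] EuclideanSpace ℝ (Fin d)) (Ay.symm w) = w := Ay.apply_symm_apply w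
      rw [h2] at this
      rw [one_mul]
      exact le_of_eq this.symm
    choose! B hB hBle using hsymm_deriv
    have hsymm_lip : ∀ a ∈ Metric.ball (τ c) δ, ∀ b ∈ Metric.ball (τ c) δ,
        ‖φ.symm a - φ.symm b‖ ≤ ‖a - b‖ := by
      intro a ha b hb
      have := (convex_ball (τ c) δ).norm_image_sub_le_of_norm_hasFDerivWithin_le
        (fun z hz => (hB z hz).hasFDerivWithinAt) (fun z hz => hBle z hz) hb ha
      simpa using this
    -- choose small ball around c
    have hU : IsOpen ((Ω ∩ τ ⁻¹' Metric.ball (τ c) δ) ∩ φ.source) :=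
      ((hC1.continuousOn).isOpen_inter_preimage hΩ Metric.isOpen_ball).inter φ.open_source
    have hcτ : τ c ∈ Metric.ball (τ c) δ := Metric.mem_ball_self hδ
    have hcU : c ∈ (Ω ∩ τ ⁻¹' Metric.ball (τ c) δ) ∩ φ.source :=
      ⟨⟨hc, hcτ⟩, hsrc⟩
    obtain ⟨r, hr, hrsub⟩ := Metric.isOpen_iff.1 hU c hcU
    refine ⟨r, hr, fun z hz => ((hrsub hz).1).1, fun x hx y hy => ?_⟩
    have hxU := hrsub hx
    have hyU := hrsub hy
    have hball_sub : Metric.ball c r ⊆ Ω := fun z hz => ((hrsub hz).1).1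
    -- ≤ direction
    have hle : ‖τ x - τ y‖ ≤ ‖x - y‖ := by
      have := (convex_ball c r).norm_image_sub_le_of_norm_hasFDerivWithin_le
        (fun z hz => (hdiff z (hball_sub hz)).hasFDerivWithinAt)
        (fun z hz => hle1 z (hball_sub hz)) hy hx
      simpa using this
    -- ≥ direction
    have hge : ‖x - y‖ ≤ ‖τ x - τ y‖ := by
      have hxinv : φ.symm (τ x) = x := by rw [← hφcoe]; exact φ.left_inv hxU.2
      have hyinv : φ.symm (τ y) = y := by rw [← hφcoe]; exact φ.left_inv hyU.2
      have := hsymm_lip (τ x) hxU.1.2 (τ y) hyU.1.2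
      rwa [hxinv, hyinv] at this
    exact le_antisymm hle hge
  -- local affinity: fderiv and τ - fderiv are locally constant
  have hlocconst : ∀ c ∈ Ω, ∃ ε > 0, Metric.ball c ε ⊆ Ω ∧
      ∀ y ∈ Metric.ball c ε,
        (fderiv ℝ τ y, τ y - fderiv ℝ τ y y) = (fderiv ℝ τ c, τ c - fderiv ℝ τ c c) := by
    intro c hc
    obtain ⟨r, hr, hball, hisom⟩ := hlocIso c hc
    have hcball : c ∈ Metric.ball c r := Metric.mem_ball_self hr
    -- inner products of differences are preserved
    have hinner : ∀ x ∈ Metric.ball c r, ∀ y ∈ Metric.ball c r,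
        ⟪τ x - τ c, τ y - τ c⟫ = ⟪x - c, y - c⟫ := by
      intro x hx y hy
      have h1 : ‖τ x - τ c‖ = ‖x - c‖ := hisom x hx c hcball
      have h2 : ‖τ y - τ c‖ = ‖y - c‖ := hisom y hy c hcball
      have h3 : ‖(τ x - τ c) - (τ y - τ c)‖ = ‖(x - c) - (y - c)‖ := by
        have h4 : ‖τ x - τ y‖ = ‖x - y‖ := hisom x hx y hy
        have e1 : (τ x - τ c) - (τ y - τ c) = τ x - τ y := by abel
        have e2 : (x - c) - (y - c) = x - y := by abel
        rw [e1, e2, h4]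
      have p1 := norm_sub_sq_real (τ x - τ c) (τ y - τ c)
      have p2 := norm_sub_sq_real (x - c) (y - c)
      rw [h1, h2, h3] at p1
      rw [p2] at p1
      linarith
    -- the orthonormal frame q
    set p : Fin d → EuclideanSpace ℝ (Fin d) := fun i => c + (r / 2) • EuclideanSpace.single i (1 : ℝ) with hp_def
    have hpball : ∀ i, p i ∈ Metric.ball c r := by
      intro i
      rw [hp_def]
      simp only [Metric.mem_ball, dist_eq_norm]
      rw [add_sub_cancel_left, norm_smul, EuclideanSpace.norm_single]
      simp only [norm_one, mul_one, Real.norm_eq_abs, abs_of_pos (by linarith : (0:ℝ) < r / 2)]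
      linarith
    have hpc : ∀ i, p i - c = (r / 2) • EuclideanSpace.single i (1 : ℝ) :=
      fun i => add_sub_cancel_left c _
    set q : Fin d → EuclideanSpace ℝ (Fin d) := fun i => (2 / r) • (τ (p i) - τ c) with hq_def
    have hinnerq : ∀ i (x : EuclideanSpace ℝ (Fin d)), x ∈ Metric.ball c r → ⟪q i, τ x - τ c⟫ = (x - c) i := by
      intro i x hx
      rw [hq_def]
      simp only [real_inner_smul_left]
      rw [hinner (p i) (hpball i) x hx, hpc i, real_inner_smul_left,
        EuclideanSpace.inner_single_left]
      simp only [map_one, one_mul]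
      have hrne : r ≠ 0 := ne_of_gt hr
      field_simp
    have hq_on : Orthonormal ℝ q := by
      rw [orthonormal_iff_ite]
      intro i j
      have := hinnerq i (p j) (hpball j)
      rw [hq_def] at this ⊢
      simp only [real_inner_smul_right]
      rw [show ((2:ℝ) / r) • (τ (p i) - τ c) = q i from rfl, hinnerq i (p j) (hpball j),
        hpc j]
      simp only [PiLp.smul_apply, EuclideanSpace.single_apply, smul_eq_mul]
      have hrne : r ≠ 0 := ne_of_gt hr
      by_cases hij : i = j
      · subst hij; simp [div_self hrne]
      · simp [hij, Ne.symm hij]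
    obtain ⟨qb, hqb⟩ := aux_onb hd hq_on
    -- τ is affine on the ball
    set L : EuclideanSpace ℝ (Fin d) →L[ℝ] EuclideanSpace ℝ (Fin d) := (qb.repr.symm.toContinuousLinearEquiv : EuclideanSpace ℝ (Fin d) →L[ℝ] EuclideanSpace ℝ (Fin d)) with hL_def
    have hLapp : ∀ w : EuclideanSpace ℝ (Fin d), L w = qb.repr.symm w := fun w => rfl
    have haff : ∀ x ∈ Metric.ball c r, τ x = τ c + L (x - c) := by
      intro x hx
      have : qb.repr (τ x - τ c) = x - c := by
        ext i
        rw [qb.repr_apply_apply, hqb i, hinnerq i x hx]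
      have h2 : τ x - τ c = qb.repr.symm (x - c) := by
        rw [← this, LinearIsometryEquiv.symm_apply_apply]
      rw [hLapp, ← h2]
      abel
    -- fderiv is constant on the ball
    have hfd : ∀ x ∈ Metric.ball c r, fderiv ℝ τ x = L := by
      intro x hx
      have hev : τ =ᶠ[nhds x] fun y => τ c + L (y - c) := by
        filter_upwards [Metric.isOpen_ball.mem_nhds hx] with y hy
        exact haff y hy
      have haffd : HasFDerivAt (fun y : EuclideanSpace ℝ (Fin d) => τ c + L (y - c)) L x := by
        have h1 : HasFDerivAt (fun y : EuclideanSpace ℝ (Fin d) => L y - L c) L x :=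
          (L.hasFDerivAt).sub_const (L c)
        have h2 : (fun y : EuclideanSpace ℝ (Fin d) => τ c + L (y - c)) = fun y : EuclideanSpace ℝ (Fin d) => τ c + (L y - L c) := by
          funext y; rw [map_sub]
        rw [h2]
        exact h1.const_add (τ c)
      rw [hev.fderiv_eq, haffd.fderiv]
    refine ⟨r, hr, hball, fun y hy => ?_⟩
    have h1 := hfd y hy
    have h2 := hfd c hcball
    have h3 := haff y hy
    rw [Prod.mk.injEq]
    constructor
    · rw [h1, h2]
    · rw [h1, h2, h3, map_sub]
      abel
  -- conclude via connectedness
  have hconst := aux_locConst hconn.isPreconnected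
    (fun x => (fderiv ℝ τ x, τ x - fderiv ℝ τ x x)) hlocconst hx₀
  obtain ⟨A, hA⟩ := hequiv x₀ hx₀
  set li : EuclideanSpace ℝ (Fin d) →ₗᵢ[ℝ] EuclideanSpace ℝ (Fin d) := ⟨(fderiv ℝ τ x₀ : EuclideanSpace ℝ (Fin d) →ₗ[ℝ] EuclideanSpace ℝ (Fin d)), hiso x₀ hx₀⟩ with hli
  have hfr : Module.finrank ℝ (EuclideanSpace ℝ (Fin d)) = Module.finrank ℝ (EuclideanSpace ℝ (Fin d)) := rfl
  refine ⟨li.toLinearIsometryEquiv hfr, τ x₀ - fderiv ℝ τ x₀ x₀, fun x hx => ?_⟩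
  have h := hconst x hx
  rw [Prod.mk.injEq] at h
  have hQ : (li.toLinearIsometryEquiv hfr) x = fderiv ℝ τ x₀ x :=
    li.toLinearIsometryEquiv_apply hfr x
  rw [hQ]
  have h2 := h.2
  rw [h.1] at h2
  have : τ x = fderiv ℝ τ x₀ x + (τ x₀ - fderiv ℝ τ x₀ x₀) := by
    rw [← h2]; abel
  exact this
end

section
/- Let ω₁, ω₂ ⊆ ℝ^d be open sets and let U : C₀(ω₁) → C_b(ω₂) be a nonzero bounded linear operator satisfying: f·g = 0 implies (Uf)·(Ug) = 0 for all f, g ∈ C₀(ω₁). Let ω₂' := {y ∈ ω₂ : ∃ f ∈ C₀(ω₁) with (Uf)(y) ≠ 0}. Then ω₂' is open and nonempty, and there exist functions h : ω₂' → ℂ \ {0} and τ : ω₂' → ω₁, both continuous, such that (Uf)(y) = h(y) f(τ(y)) for all y ∈ ω₂' and all f ∈ C₀(ω₁). -/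
open scoped ZeroAtInfty
open Set Function Filter Topology

namespace Stmt7Aux

variable {X : Type*} [TopologicalSpace X] [T2Space X] [RegularSpace X] [LocallyCompactSpace X]

/-- complexify a compactly supported real continuous function into `C₀(X, ℂ)`. -/
noncomputable def cpx (χ : C(X, ℝ)) (hχ : HasCompactSupport (χ : X → ℝ)) : C₀(X, ℂ) :=
  { toFun := fun x => (χ x : ℂ)
    continuous_toFun := Complex.continuous_ofReal.comp χ.continuous
    zero_at_infty' := by
      have : HasCompactSupport (fun x => ((χ x : ℝ) : ℂ)) :=
        hχ.comp_left (g := Complex.ofReal) Complex.ofReal_zero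
      exact this.is_zero_at_infty }

@[simp] lemma cpx_apply (χ : C(X, ℝ)) (hχ) (x : X) : cpx χ hχ x = (χ x : ℂ) := rfl

lemma telescope (t : ℕ → ℝ) (n : ℕ) :
    1 - ∏ j ∈ Finset.range n, t j
      = ∑ i ∈ Finset.range n, (1 - t i) * ∏ j ∈ Finset.range i, t j := by
  induction n with
  | zero => simp
  | succ n ih =>
    rw [Finset.sum_range_succ, Finset.prod_range_succ, ← ih]
    ring

end Stmt7Aux

namespace Stmt7Aux

variable {X : Type*} [TopologicalSpace X] [T2Space X] [RegularSpace X] [LocallyCompactSpace X]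

/-- norm bound for C₀ functions from pointwise bounds -/
lemma c0_norm_le {f : C₀(X, ℂ)} {C : ℝ} (hC : 0 ≤ C) (h : ∀ x, ‖f x‖ ≤ C) : ‖f‖ ≤ C := by
  rw [← ZeroAtInftyContinuousMap.norm_toBCF_eq_norm]
  exact BoundedContinuousFunction.norm_le hC |>.mpr h

theorem point_rep (φ : C₀(X, ℂ) →L[ℂ] ℂ)
    (hdisj : ∀ f g : C₀(X, ℂ), (∀ x, f x * g x = 0) → φ f * φ g = 0)
    (hφ : ∃ f, φ f ≠ 0) :
    ∃ (x : X) (c : ℂ), c ≠ 0 ∧ ∀ f, φ f = c * f x := by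
  classical
  obtain ⟨f₀, hf₀⟩ := hφ
  -- Step A : a compactly supported g with φ g ≠ 0
  set ε : ℝ := ‖φ f₀‖ / (‖φ‖ + 1) with hεdef
  have hφf₀ : 0 < ‖φ f₀‖ := norm_pos_iff.mpr hf₀
  have hεpos : 0 < ε := div_pos hφf₀ (by positivity)
  have h1 : f₀ ⁻¹' Metric.ball 0 ε ∈ Filter.cocompact X :=
    (zero_at_infty f₀) (Metric.ball_mem_nhds 0 hεpos)
  rw [Filter.mem_cocompact] at h1
  obtain ⟨K, hK, hKs⟩ := h1
  obtain ⟨χ, hχ1, -, hχc, hχ01⟩ :=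
    exists_continuous_one_zero_of_isCompact hK isClosed_empty (disjoint_empty K)
  set g : C₀(X, ℂ) := f₀ * cpx χ hχc with hgdef
  have hfg : ‖f₀ - g‖ ≤ ε := by
    apply c0_norm_le hεpos.le
    intro x
    have hx : (f₀ - g) x = f₀ x * (1 - (χ x : ℂ)) := by
      simp [hgdef, ZeroAtInftyContinuousMap.sub_apply, ZeroAtInftyContinuousMap.mul_apply]
      ring
    rw [hx]
    by_cases hxK : x ∈ K
    · simp [hχ1 hxK]
      positivity
    · have h2 : ‖f₀ x‖ < ε := by
        have := hKs hxK
        simpa [Metric.mem_ball, dist_eq_norm] using this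
      have h3 : ‖(1 - (χ x : ℂ))‖ ≤ 1 := by
        have := hχ01 x
        rw [Set.mem_Icc] at this
        have : ((1 : ℂ) - (χ x : ℂ)) = ((1 - χ x : ℝ) : ℂ) := by push_cast; ring
        rw [this, Complex.norm_real, Real.norm_eq_abs, abs_le]
        constructor <;> nlinarith [(hχ01 x).1, (hχ01 x).2]
      calc ‖f₀ x * (1 - (χ x : ℂ))‖ = ‖f₀ x‖ * ‖(1 - (χ x : ℂ))‖ := norm_mul _ _
        _ ≤ ε * 1 := by
            apply mul_le_mul h2.le h3 (norm_nonneg _) hεpos.le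
        _ = ε := mul_one ε
  have hg : φ g ≠ 0 := by
    intro h0
    have h2 : ‖φ f₀‖ ≤ ‖φ‖ * ε := by
      calc ‖φ f₀‖ = ‖φ (f₀ - g)‖ := by rw [map_sub, h0, sub_zero]
        _ ≤ ‖φ‖ * ‖f₀ - g‖ := φ.le_opNorm _
        _ ≤ ‖φ‖ * ε := by
            exact mul_le_mul_of_nonneg_left hfg (by positivity)
    have h3 : ‖φ‖ * ε < (‖φ‖ + 1) * ε := by
      exact mul_lt_mul_of_pos_right (lt_add_one _) hεpos
    have h4 : (‖φ‖ + 1) * ε = ‖φ f₀‖ := by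
      rw [hεdef]
      field_simp [show ‖φ‖ + 1 ≠ 0 by positivity]
    linarith
  -- Step B : existence of a support point
  have hsupp : ∃ x : X, ∀ V ∈ 𝓝 x, ∃ f : C₀(X, ℂ), Function.support f ⊆ V ∧ φ f ≠ 0 := by
    by_contra hns
    push_neg at hns
    -- each x has an open null neighborhood
    have hnull : ∀ x : X, ∃ O : Set X, IsOpen O ∧ x ∈ O ∧
        ∀ f : C₀(X, ℂ), Function.support f ⊆ O → φ f = 0 := by
      intro x
      obtain ⟨V, hV, hVnull⟩ := hns x
      refine ⟨interior V, isOpen_interior, mem_interior_iff_mem_nhds.mpr hV, ?_⟩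
      intro f hf
      exact hVnull f (hf.trans interior_subset)
    choose O hOopen hOmem hOnull using hnull
    obtain ⟨s, hs⟩ := hχc.elim_finite_subcover O hOopen
      (fun x _ => Set.mem_iUnion.mpr ⟨x, hOmem x⟩)
    obtain ⟨Kc, hKccomp, hKcsub, hKccover⟩ :=
      hχc.finite_compact_cover s O (fun i _ => hOopen i) hs
    have hbump : ∀ i : X, ∃ ψ : C(X, ℝ), Set.EqOn ψ 1 (Kc i) ∧ Set.EqOn ψ 0 (O i)ᶜ ∧
        HasCompactSupport ψ ∧ ∀ x, ψ x ∈ Set.Icc (0 : ℝ) 1 := fun i =>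
      exists_continuous_one_zero_of_isCompact (hKccomp i) (hOopen i).isClosed_compl
        (disjoint_compl_right_iff_subset.mpr (hKcsub i))
    choose ψ hψ1 hψ0 hψc hψ01 using hbump
    have main : ∀ L : List X, ∀ q : C₀(X, ℂ),
        (∀ x, q x ≠ 0 → ∃ i ∈ L, x ∈ Kc i) → φ q = 0 := by
      intro L
      induction L with
      | nil =>
        intro q hq
        have hq0 : q = 0 := by
          ext x
          by_contra hx
          obtain ⟨i, hi, -⟩ := hq x (by simpa using hx)
          simp at hi
        rw [hq0, map_zero]
      | cons a L ih =>
        intro q hq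
        have h1 : φ (q * cpx (ψ a) (hψc a)) = 0 := by
          apply hOnull a
          intro x hx
          have hx' : (q * cpx (ψ a) (hψc a)) x ≠ 0 := hx
          have hψx : (ψ a) x ≠ 0 := by
            intro h0
            apply hx'
            simp [ZeroAtInftyContinuousMap.mul_apply, h0]
          by_contra hxO
          exact hψx (hψ0 a hxO)
        have h2 : φ (q - q * cpx (ψ a) (hψc a)) = 0 := by
          apply ih
          intro x hx
          have hx' : q x - q x * ((ψ a x : ℝ) : ℂ) ≠ 0 := by
            simpa [ZeroAtInftyContinuousMap.sub_apply,
              ZeroAtInftyContinuousMap.mul_apply] using hx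
          have hqx : q x ≠ 0 := by
            intro h0; apply hx'; rw [h0]; ring
          obtain ⟨i, hi, hxi⟩ := hq x hqx
          rcases List.mem_cons.mp hi with rfl | hiL
          · exfalso
            apply hx'
            have : ψ i x = 1 := hψ1 i hxi
            rw [this]; push_cast; ring
          · exact ⟨i, hiL, hxi⟩
        have := map_sub φ q (q * cpx (ψ a) (hψc a))
        rw [h2, h1, sub_zero] at this
        exact this.symm
    apply hg
    apply main s.toList g
    intro x hx
    have hχx : χ x ≠ 0 := by
      intro h0
      apply hx
      simp [hgdef, ZeroAtInftyContinuousMap.mul_apply, h0]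
    have hxsupp : x ∈ tsupport χ := subset_closure hχx
    rw [hKccover] at hxsupp
    obtain ⟨i, his, hxi⟩ := Set.mem_iUnion₂.mp hxsupp
    exact ⟨i, Finset.mem_toList.mpr his, hxi⟩
  obtain ⟨x₀, hx₀⟩ := hsupp
  -- Step C : functions vanishing at x₀ are killed by φ
  have key : ∀ f : C₀(X, ℂ), f x₀ = 0 → φ f = 0 := by
    intro f hf
    have bound : ∀ ε' : ℝ, 0 < ε' → ‖φ f‖ ≤ ‖φ‖ * ε' := by
      intro ε' hε'
      have hV : IsOpen {x : X | ‖f x‖ < ε'} :=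
        isOpen_lt ((map_continuous f).norm) continuous_const
      have hx₀V : x₀ ∈ {x : X | ‖f x‖ < ε'} := by simp [hf, hε']
      obtain ⟨C, hCn, hCsub, hCcomp⟩ :=
        LocallyCompactSpace.local_compact_nhds x₀ _ (hV.mem_nhds hx₀V)
      obtain ⟨χ', hχ'1, hχ'0, hχ'c, hχ'01⟩ :=
        exists_continuous_one_zero_of_isCompact hCcomp hV.isClosed_compl
          (disjoint_compl_right_iff_subset.mpr hCsub)
      obtain ⟨ψf, hψsub, hψφ⟩ := hx₀ (interior C) (interior_mem_nhds.mpr hCn)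
      have hginner : φ (f - f * cpx χ' hχ'c) = 0 := by
        have h0 : ∀ x, (f - f * cpx χ' hχ'c) x * ψf x = 0 := by
          intro x
          by_cases hψx : ψf x = 0
          · rw [hψx, mul_zero]
          · have hxC : x ∈ C := interior_subset (hψsub hψx)
            have h1 : χ' x = 1 := hχ'1 hxC
            simp [ZeroAtInftyContinuousMap.sub_apply,
              ZeroAtInftyContinuousMap.mul_apply, h1]
        rcases mul_eq_zero.mp (hdisj _ _ h0) with h | h
        · exact h
        · exact absurd h hψφ
      have hmsub := map_sub φ f (f * cpx χ' hχ'c)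
      rw [hmsub] at hginner
      have hfeq : φ f = φ (f * cpx χ' hχ'c) := sub_eq_zero.mp hginner
      rw [hfeq]
      calc ‖φ (f * cpx χ' hχ'c)‖ ≤ ‖φ‖ * ‖f * cpx χ' hχ'c‖ := φ.le_opNorm _
        _ ≤ ‖φ‖ * ε' := by
          apply mul_le_mul_of_nonneg_left _ (by positivity)
          apply c0_norm_le hε'.le
          intro x
          by_cases hxV : x ∈ {x : X | ‖f x‖ < ε'}
          · have h3 : ‖((χ' x : ℝ) : ℂ)‖ ≤ 1 := by
              rw [Complex.norm_real, Real.norm_eq_abs, abs_le]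
              constructor <;> nlinarith [(hχ'01 x).1, (hχ'01 x).2]
            calc ‖(f * cpx χ' hχ'c) x‖ = ‖f x‖ * ‖((χ' x : ℝ) : ℂ)‖ := by
                  rw [ZeroAtInftyContinuousMap.mul_apply]; exact norm_mul _ _
              _ ≤ ε' * 1 := mul_le_mul (le_of_lt hxV) h3 (norm_nonneg _) hε'.le
              _ = ε' := mul_one ε'
          · have h4 : χ' x = 0 := hχ'0 hxV
            rw [ZeroAtInftyContinuousMap.mul_apply]
            simp [h4]
            exact hε'.le
    by_contra hne
    have hpos : 0 < ‖φ f‖ := norm_pos_iff.mpr hne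
    have hφn : (0 : ℝ) ≤ ‖φ‖ := ContinuousLinearMap.opNorm_nonneg φ
    have h2 := bound (‖φ f‖ / (2 * (‖φ‖ + 1))) (by positivity)
    rw [← mul_div_assoc, le_div_iff₀ (by positivity)] at h2
    nlinarith
  -- conclusion
  obtain ⟨χ₀, hχ₀1, -, hχ₀c, -⟩ :=
    exists_continuous_one_zero_of_isCompact (isCompact_singleton (x := x₀))
      isClosed_empty (disjoint_empty _)
  set e : C₀(X, ℂ) := cpx χ₀ hχ₀c with hedef
  have he : e x₀ = 1 := by
    have : χ₀ x₀ = 1 := hχ₀1 (Set.mem_singleton x₀)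
    simp [hedef, this]
  have hrep : ∀ f : C₀(X, ℂ), φ f = φ e * f x₀ := by
    intro f
    have h0 : (f - f x₀ • e) x₀ = 0 := by
      simp [ZeroAtInftyContinuousMap.sub_apply,
        ZeroAtInftyContinuousMap.smul_apply, he]
    have h1 := key _ h0
    rw [map_sub, map_smul, smul_eq_mul] at h1
    have h2 : φ f = f x₀ * φ e := sub_eq_zero.mp h1
    rw [h2]; ring
  have hc : φ e ≠ 0 := by
    intro h0
    exact hf₀ (by rw [hrep f₀, h0, zero_mul])
  exact ⟨x₀, φ e, hc, hrep⟩

end Stmt7Aux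

/-- A nonzero bounded linear disjointness-preserving operator
U : C₀(ω₁) → C_b(ω₂) acts, on the open nonempty set ω₂' where it does not
vanish, as a weighted composition operator Uf(y) = h(y)·f(τ(y)) with
continuous h ≠ 0 and continuous τ : ω₂' → ω₁. -/
theorem stmt_7 {d : ℕ} (ω₁ ω₂ : Set (EuclideanSpace ℝ (Fin d)))
    (h₁ : IsOpen ω₁) (h₂ : IsOpen ω₂)
    (U : C₀(ω₁, ℂ) →L[ℂ] BoundedContinuousFunction ω₂ ℂ) (hU0 : U ≠ 0)
    (hdisj : ∀ f g : C₀(ω₁, ℂ), (∀ x, f x * g x = 0) →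
      ∀ y, U f y * U g y = 0) :
    IsOpen {y : ω₂ | ∃ f : C₀(ω₁, ℂ), U f y ≠ 0} ∧
    {y : ω₂ | ∃ f : C₀(ω₁, ℂ), U f y ≠ 0}.Nonempty ∧
    ∃ (h : ω₂ → ℂ) (τ : ω₂ → ω₁),
      ContinuousOn h {y : ω₂ | ∃ f : C₀(ω₁, ℂ), U f y ≠ 0} ∧
      ContinuousOn τ {y : ω₂ | ∃ f : C₀(ω₁, ℂ), U f y ≠ 0} ∧
      (∀ y ∈ {y : ω₂ | ∃ f : C₀(ω₁, ℂ), U f y ≠ 0}, h y ≠ 0) ∧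
      ∀ y ∈ {y : ω₂ | ∃ f : C₀(ω₁, ℂ), U f y ≠ 0},
        ∀ f : C₀(ω₁, ℂ), U f y = h y * f (τ y) := by
  classical
  haveI : LocallyCompactSpace ω₁ := h₁.locallyCompactSpace
  set S := {y : ω₂ | ∃ f : C₀(ω₁, ℂ), U f y ≠ 0} with hSdef
  have hopen : IsOpen S := by
    have hS : S = ⋃ f : C₀(ω₁, ℂ), (fun y => U f y) ⁻¹' ({0}ᶜ) := by
      ext y; simp [hSdef]
    rw [hS]
    exact isOpen_iUnion fun f => isOpen_compl_singleton.preimage (U f).continuous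
  have hne : S.Nonempty := by
    rcases Set.eq_empty_or_nonempty S with hemp | h
    · exfalso
      apply hU0
      refine ContinuousLinearMap.ext fun f => BoundedContinuousFunction.ext fun y => ?_
      simp only [ContinuousLinearMap.zero_apply, BoundedContinuousFunction.coe_zero,
        Pi.zero_apply]
      by_contra hy
      have hyS : y ∈ S := ⟨f, hy⟩
      rw [hemp] at hyS
      exact hyS
    · exact h
  have hrep : ∀ y : ω₂, y ∈ S →
      ∃ p : ω₁ × ℂ, p.2 ≠ 0 ∧ ∀ f : C₀(ω₁, ℂ), U f y = p.2 * f p.1 := by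
    intro y hy
    obtain ⟨x, c, hc, hx⟩ := Stmt7Aux.point_rep ((BoundedContinuousFunction.evalCLM ℂ y).comp U)
      (fun f g hfg => hdisj f g hfg y) hy
    exact ⟨(x, c), hc, fun f => hx f⟩
  obtain ⟨y₀', hy₀'⟩ := hne
  obtain ⟨p₀, -, -⟩ := hrep y₀' hy₀'
  set F : ω₂ → ω₁ × ℂ := fun y =>
    if hy : y ∈ S then (hrep y hy).choose else (p₀.1, 1) with hFdef
  have hF : ∀ y ∈ S, (F y).2 ≠ 0 ∧ ∀ f : C₀(ω₁, ℂ), U f y = (F y).2 * f (F y).1 := by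
    intro y hy
    have hFy : F y = (hrep y hy).choose := dif_pos hy
    rw [hFy]
    exact (hrep y hy).choose_spec
  have hτcont : ContinuousOn (fun y => (F y).1) S := by
    intro y₀ hy₀
    rw [ContinuousWithinAt, Filter.tendsto_def]
    intro V hV
    obtain ⟨O, hOsub, hOopen, hxO⟩ := mem_nhds_iff.mp hV
    obtain ⟨χ, hχ1, hχ0, hχc, -⟩ :=
      exists_continuous_one_zero_of_isCompact (isCompact_singleton (x := (F y₀).1))
        hOopen.isClosed_compl
        (disjoint_compl_right_iff_subset.mpr (Set.singleton_subset_iff.mpr hxO))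
    set f : C₀(ω₁, ℂ) := Stmt7Aux.cpx χ hχc with hfdef
    have hUf0 : U f y₀ ≠ 0 := by
      rw [(hF y₀ hy₀).2 f]
      have h1 : χ ((F y₀).1) = 1 := hχ1 (Set.mem_singleton _)
      simp [hfdef, h1, (hF y₀ hy₀).1]
    have hev : ∀ᶠ y in 𝓝 y₀, U f y ≠ 0 :=
      ((U f).continuous.continuousAt).eventually_ne hUf0
    filter_upwards [eventually_nhdsWithin_of_eventually_nhds hev, self_mem_nhdsWithin]
      with y hy hyS
    have h2 := (hF y hyS).2 f
    have h3 : χ ((F y).1) ≠ 0 := by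
      intro h0
      rw [h2] at hy
      apply hy
      simp [hfdef, h0]
    have h4 : (F y).1 ∈ O := by
      by_contra hnx
      exact h3 (hχ0 hnx)
    exact hOsub h4
  have hhcont : ContinuousOn (fun y => (F y).2) S := by
    intro y₀ hy₀
    obtain ⟨C, hCcomp, hCn⟩ := exists_compact_mem_nhds ((F y₀).1)
    obtain ⟨χ, hχ1, -, hχc, -⟩ :=
      exists_continuous_one_zero_of_isCompact hCcomp isClosed_empty (disjoint_empty _)
    set f : C₀(ω₁, ℂ) := Stmt7Aux.cpx χ hχc with hfdef
    have hev : (fun y => (F y).1) ⁻¹' (interior C) ∈ 𝓝[S] y₀ :=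
      hτcont y₀ hy₀ (interior_mem_nhds.mpr hCn)
    have heq : (fun y => (F y).2) =ᶠ[𝓝[S] y₀] (fun y => U f y) := by
      filter_upwards [hev, self_mem_nhdsWithin] with y h1 h2
      have h3 := (hF y h2).2 f
      have h4 : χ ((F y).1) = 1 := hχ1 (interior_subset h1)
      rw [h3]
      simp [hfdef, h4]
    have heq0 : (F y₀).2 = U f y₀ := by
      have h3 := (hF y₀ hy₀).2 f
      have h4 : χ ((F y₀).1) = 1 := hχ1 (mem_of_mem_nhds hCn)
      rw [h3]
      simp [hfdef, h4]
    exact (((U f).continuous.continuousAt).continuousWithinAt).congr_of_eventuallyEq heq heq0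
  exact ⟨hopen, ⟨y₀', hy₀'⟩, (fun y => (F y).2), (fun y => (F y).1), hhcont, hτcont,
    fun y hy => (hF y hy).1, fun y hy f => (hF y hy).2 f⟩
end

section
/- Let ω₁, ω₂ be disjoint bounded open subsets of ℝ^d that are isometric to each other (there is a Euclidean isometry mapping ω₁ onto ω₂), and let Ω ⊆ ℝ^d be a bounded connected open set with closure(Ω) = closure(ω₁) ∪ closure(ω₂). Let Γ be a connected component of ∂Ω with diam Γ = diam Ω. Then Γ meets both ∂ω₁ and ∂ω₂, and there is a point z ∈ ∂ω₁ ∩ ∂ω₂ ∩ Γ. -/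
open Set Metric Bornology

section helpers

lemma exists_dist_eq_diam' {X : Type*} [PseudoMetricSpace X] {s : Set X} (hs : IsCompact s)
    (hne : s.Nonempty) : ∃ p ∈ s, ∃ q ∈ s, dist p q = Metric.diam s := by
  obtain ⟨⟨p, q⟩, hpq, hmax⟩ := (hs.prod hs).exists_isMaxOn (hne.prod hne)
    (continuous_dist.continuousOn : ContinuousOn (fun t : X × X => dist t.1 t.2) _)
  refine ⟨p, hpq.1, q, hpq.2, le_antisymm (Metric.dist_le_diam_of_mem hs.isBounded hpq.1 hpq.2) ?_⟩
  refine Metric.diam_le_of_forall_dist_le dist_nonneg (fun a ha b hb => ?_)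
  have := hmax (show (a, b) ∈ s ×ˢ s from Set.mem_prod.2 ⟨ha, hb⟩)
  simpa using this

lemma twopi_int_eq {s : Set ℝ} (hs : IsPreconnected s)
    (hsub : ∀ r ∈ s, ∃ m : ℤ, r = m * (2 * Real.pi)) {r₁ r₂ : ℝ}
    (h₁ : r₁ ∈ s) (h₂ : r₂ ∈ s) : r₁ = r₂ := by
  have pi_pos := Real.pi_pos
  have key : ∀ u v : ℝ, u ∈ s → v ∈ s → u < v → False := by
    intro u v hu hv huv
    obtain ⟨m₁, rfl⟩ := hsub u hu
    obtain ⟨m₂, rfl⟩ := hsub v hv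
    have hm : m₁ < m₂ := by
      by_contra hcon
      push_neg at hcon
      have : (m₂:ℝ) ≤ m₁ := by exact_mod_cast hcon
      nlinarith
    have hmem : ((2*m₁+1) * Real.pi : ℝ) ∈ Icc ((m₁:ℝ) * (2*Real.pi)) ((m₂:ℝ) * (2*Real.pi)) := by
      constructor
      · nlinarith
      · have : (2*(m₁:ℝ)+1) ≤ 2*(m₂:ℝ) := by
          have : (m₁:ℝ) + 1 ≤ m₂ := by exact_mod_cast hm
          linarith
        nlinarith
    obtain ⟨m₃, hm₃⟩ := hsub _ (hs.Icc_subset hu hv hmem)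
    have h2 : (2*(m₁:ℝ)+1) * Real.pi = (2*(m₃:ℝ)) * Real.pi := by rw [hm₃]; ring
    have h3 : (2*(m₁:ℝ)+1) = 2*(m₃:ℝ) := mul_right_cancel₀ (ne_of_gt pi_pos) h2
    have h4 : 2*m₁+1 = 2*m₃ := by exact_mod_cast h3
    omega
  rcases lt_trichotomy r₁ r₂ with h | h | h
  · exact absurd (key _ _ h₁ h₂ h) (fun h => h)
  · exact h
  · exact absurd (key _ _ h₂ h₁ h) (fun h => h)

/-- A continuous map into the circle admits a continuous logarithm on a closed ball. -/
lemma exists_circle_lift {E : Type*} [NormedAddCommGroup E] [NormedSpace ℝ E] [ProperSpace E]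
    {g : E → Circle} (hg : Continuous g) (M : ℝ) :
    ∃ θ : E → ℝ, ContinuousOn θ (closedBall (0:E) M) ∧
      ∀ z ∈ closedBall (0:E) M, Circle.exp (θ z) = g z := by
  have hgC : Continuous fun z : E => (g z : ℂ) := continuous_subtype_val.comp hg
  have hK : IsCompact (closedBall (0:E) M) := isCompact_closedBall _ _
  have hu : UniformContinuousOn (fun z : E => (g z : ℂ)) (closedBall (0:E) M) :=
    hK.uniformContinuousOn_of_continuous hgC.continuousOn
  rw [Metric.uniformContinuousOn_iff] at hu
  obtain ⟨δ, hδpos, hδ⟩ := hu 1 one_pos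
  obtain ⟨n, hn⟩ := exists_nat_gt (M / δ)
  set N : ℕ := n + 1 with hNdef
  have hNpos : (0:ℝ) < N := by positivity
  have hMN : M < δ * N := by
    have h1 : M / δ < N := lt_of_lt_of_le hn (by exact_mod_cast Nat.le_succ n)
    calc M = (M / δ) * δ := by field_simp
    _ < (N:ℝ) * δ := by apply mul_lt_mul_of_pos_right h1 hδpos
    _ = δ * N := mul_comm _ _
  have hmem : ∀ z ∈ closedBall (0:E) M, ∀ k : ℕ, k ≤ N → ((k:ℝ)/N) • z ∈ closedBall (0:E) M := by
    intro z hz k hk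
    rw [mem_closedBall_zero_iff] at hz ⊢
    rw [norm_smul, Real.norm_eq_abs, _root_.abs_of_nonneg (by positivity)]
    have h1 : (k:ℝ)/N ≤ 1 := by
      rw [div_le_one hNpos]; exact_mod_cast hk
    nlinarith [norm_nonneg z]
  have hstep : ∀ z ∈ closedBall (0:E) M, ∀ k : ℕ,
      dist ((((k+1:ℕ):ℝ)/N) • z) (((k:ℝ)/N) • z) < δ := by
    intro z hz k
    rw [mem_closedBall_zero_iff] at hz
    rw [dist_eq_norm, ← sub_smul]
    have h1 : ((k+1:ℕ):ℝ)/N - (k:ℝ)/N = 1/N := by push_cast; ring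
    rw [h1, norm_smul, Real.norm_eq_abs, _root_.abs_of_nonneg (by positivity)]
    calc 1/(N:ℝ) * ‖z‖ ≤ 1/(N:ℝ) * M := by
          apply mul_le_mul_of_nonneg_left hz (by positivity)
    _ < δ := by rw [div_mul_eq_mul_div, one_mul, div_lt_iff₀ hNpos]; linarith [hMN]
  set r : ℕ → E → Circle := fun k z =>
    g ((((k+1:ℕ):ℝ)/N) • z) * (g (((k:ℝ)/N) • z))⁻¹ with hrdef
  have hrC : ∀ k, Continuous fun z => r k z := by
    intro k
    exact (hg.comp (continuous_const_smul _)).mul ((hg.comp (continuous_const_smul _)).inv)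
  have hrnear : ∀ z ∈ closedBall (0:E) M, ∀ k : ℕ, k < N → ‖(r k z : ℂ) - 1‖ < 1 := by
    intro z hz k hk
    have h0 : ((r k z : ℂ)) - 1
        = ((g ((((k+1:ℕ):ℝ)/N) • z) : ℂ) - (g (((k:ℝ)/N) • z) : ℂ))
          * ((g (((k:ℝ)/N) • z) : ℂ))⁻¹ := by
      push_cast [hrdef]
      field_simp
    rw [h0, norm_mul, norm_inv, Circle.norm_coe, inv_one, mul_one, ← Complex.dist_eq]
    exact hδ _ (hmem z hz (k+1) hk) _ (hmem z hz k (le_of_lt hk)) (hstep z hz k)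
  have hrslit : ∀ z ∈ closedBall (0:E) M, ∀ k : ℕ, k < N → (r k z : ℂ) ∈ Complex.slitPlane := by
    intro z hz k hk
    rw [Complex.mem_slitPlane_iff]
    left
    have h1 := hrnear z hz k hk
    have h2 := Complex.abs_re_le_norm ((r k z : ℂ) - 1)
    rw [Complex.sub_re, Complex.one_re] at h2
    have h3 := abs_lt.mp (lt_of_le_of_lt h2 h1)
    linarith [h3.1]
  refine ⟨fun z => Complex.arg (g 0) + ∑ k ∈ Finset.range N, Complex.arg (r k z), ?_, ?_⟩
  · apply ContinuousOn.add continuousOn_const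
    apply continuousOn_finset_sum
    intro k hk
    rw [Finset.mem_range] at hk
    intro z hz
    have hc : Continuous fun z => (r k z : ℂ) := continuous_subtype_val.comp (hrC k)
    have h2 : ContinuousAt (fun w => Complex.arg ((r k w : ℂ))) z :=
      ContinuousAt.comp (g := Complex.arg) (f := fun w => (r k w : ℂ))
        (Complex.continuousAt_arg (hrslit z hz k hk)) hc.continuousAt
    exact h2.continuousWithinAt
  · intro z hz
    have key : ∀ m : ℕ, m ≤ N →
        Circle.exp (Complex.arg (g 0) + ∑ k ∈ Finset.range m, Complex.arg (r k z))
          = g (((m:ℝ)/N) • z) := by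
      intro m hm
      induction m with
      | zero =>
        simp only [Finset.range_zero, Finset.sum_empty, add_zero, Nat.cast_zero, zero_div,
          zero_smul]
        exact Circle.exp_arg (g 0)
      | succ m ih =>
        have hm' : m ≤ N := le_of_lt (Nat.lt_of_succ_le hm)
        rw [Finset.sum_range_succ, ← add_assoc, Circle.exp_add, ih hm', Circle.exp_arg]
        show g (((m:ℝ)/N)•z) * (g ((((m+1:ℕ):ℝ)/N)•z) * (g (((m:ℝ)/N)•z))⁻¹)
          = g ((((m+1:ℕ):ℝ)/N)•z)
        rw [mul_comm, inv_mul_cancel_right]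
    have hfin := key N le_rfl
    rw [div_self (ne_of_gt hNpos), one_smul] at hfin
    exact hfin

end helpers

section mainaux

lemma main_aux {d : ℕ} (hd : 1 < d)
    (Ω ω₁ ω₂ Γ : Set (EuclideanSpace ℝ (Fin d)))
    (hΩo : IsOpen Ω) (hΩc : IsConnected Ω) (hΩb : Bornology.IsBounded Ω)
    (hclos : closure Ω = closure ω₁ ∪ closure ω₂)
    (hdiameq : Metric.diam ω₁ = Metric.diam ω₂)
    (hΓ : ∃ z ∈ frontier Ω, Γ = connectedComponentIn (frontier Ω) z)
    (hdiam : Metric.diam Γ = Metric.diam Ω)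
    (hD : 0 < Metric.diam Ω)
    (hempty : Γ ∩ closure ω₁ = ∅) : False := by
  classical
  obtain ⟨x₀, hx₀, hΓdef⟩ := hΓ
  set D := Metric.diam Ω with hDdef
  set K := closure Ω with hKdef
  have hKb : IsBounded K := hΩb.closure
  have hKc : IsCompact K := hΩb.isCompact_closure
  have hKconn : IsConnected K := hΩc.closure
  have hKdiam : Metric.diam K = D := Metric.diam_closure _
  have hΩK : Ω ⊆ K := subset_closure
  have hfrK : frontier Ω ⊆ K := frontier_subset_closure
  have hfrc : IsCompact (frontier Ω) :=
    Metric.isCompact_of_isClosed_isBounded isClosed_frontier (hKb.subset hfrK)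
  haveI : CompactSpace ↥(frontier Ω) := isCompact_iff_compactSpace.mp hfrc
  have hΓsub : Γ ⊆ frontier Ω := hΓdef ▸ connectedComponentIn_subset _ _
  have hΓconn : IsConnected Γ := hΓdef ▸ isConnected_connectedComponentIn_iff.mpr hx₀
  have hΓim : Γ = Subtype.val '' connectedComponent (⟨x₀, hx₀⟩ : ↥(frontier Ω)) :=
    hΓdef.trans (connectedComponentIn_eq_image hx₀)
  have hΓcomp : IsCompact Γ := by
    rw [hΓim]
    exact (isClosed_connectedComponent.isCompact).image continuous_subtype_val
  have hΓne : Γ.Nonempty := ⟨x₀, hΓdef ▸ mem_connectedComponentIn hx₀⟩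
  -- diametral pair in Γ
  obtain ⟨x, hxΓ, y, hyΓ, hxy⟩ := exists_dist_eq_diam' hΓcomp hΓne
  have hxyD : dist x y = D := by rw [hxy, hdiam]
  have hxK : x ∈ K := hfrK (hΓsub hxΓ)
  have hyK : y ∈ K := hfrK (hΓsub hyΓ)
  -- Γ avoids closure ω₁
  have hnotΓ : ∀ p, p ∈ Γ → p ∉ closure ω₁ := by
    intro p hp hp1
    exact Set.eq_empty_iff_forall_notMem.mp hempty p ⟨hp, hp1⟩
  have hΓω₂ : Γ ⊆ closure ω₂ := by
    intro p hp
    have h1 : p ∈ closure ω₁ ∪ closure ω₂ := by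
      rw [← hclos]; exact hfrK (hΓsub hp)
    exact h1.resolve_left (hnotΓ p hp)
  have hsub1 : closure ω₁ ⊆ K := by rw [hclos]; exact subset_union_left
  have hsub2 : closure ω₂ ⊆ K := by rw [hclos]; exact subset_union_right
  -- diameters
  have h2D : Metric.diam ω₂ = D := by
    apply le_antisymm
    · calc Metric.diam ω₂ = Metric.diam (closure ω₂) := (Metric.diam_closure _).symm
      _ ≤ Metric.diam K := Metric.diam_mono hsub2 hKb
      _ = D := hKdiam
    · rw [← hdiam]
      calc Metric.diam Γ ≤ Metric.diam (closure ω₂) := Metric.diam_mono hΓω₂ (hKb.subset hsub2)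
      _ = Metric.diam ω₂ := Metric.diam_closure _
  have h1D : Metric.diam (closure ω₁) = D := by rw [Metric.diam_closure, hdiameq, h2D]
  have h1ne : (closure ω₁).Nonempty := by
    rcases Set.eq_empty_or_nonempty (closure ω₁) with h | h
    · rw [h, Metric.diam_empty] at h1D
      exact absurd h1D.symm (ne_of_gt hD)
    · exact h
  obtain ⟨a, haω, b, hbω, hab⟩ := exists_dist_eq_diam'
    (Metric.isCompact_of_isClosed_isBounded isClosed_closure (hKb.subset hsub1)) h1ne
  have habD : dist a b = D := by rw [hab, h1D]
  have haK : a ∈ K := hsub1 haω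
  have hbK : b ∈ K := hsub1 hbω
  -- unit directions and escape rays
  have hunorm : ∀ p q : EuclideanSpace ℝ (Fin d), dist p q = D → ‖D⁻¹ • (p - q)‖ = 1 := by
    intro p q hpq
    have hnorm : ‖p - q‖ = D := by rw [← dist_eq_norm]; exact hpq
    rw [norm_smul, Real.norm_eq_abs, _root_.abs_of_pos (inv_pos.mpr hD), hnorm]
    field_simp
  have hray : ∀ p q : EuclideanSpace ℝ (Fin d), p ∈ K → q ∈ K → dist p q = D →
      ∀ t : ℝ, 0 < t →
        (p + t • (D⁻¹ • (p - q)) ∉ K ∧ dist (p + t • (D⁻¹ • (p - q))) p = t) := by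
    intro p q hp hq hpq t ht
    have hnorm : ‖p - q‖ = D := by rw [← dist_eq_norm]; exact hpq
    constructor
    · intro hmem
      have h1 : p + t • (D⁻¹ • (p - q)) - q = (1 + t * D⁻¹) • (p - q) := by
        rw [smul_smul]; module
      have hpos : (0:ℝ) < 1 + t * D⁻¹ := by
        have := inv_pos.mpr hD
        nlinarith
      have h2 : dist (p + t • (D⁻¹ • (p - q))) q = D + t := by
        rw [dist_eq_norm, h1, norm_smul, Real.norm_eq_abs, _root_.abs_of_pos hpos, hnorm]
        field_simp
      have h3 := Metric.dist_le_diam_of_mem hKb hmem hq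
      rw [hKdiam, h2] at h3
      linarith
    · rw [dist_eq_norm, add_sub_cancel_left, norm_smul, Real.norm_eq_abs, _root_.abs_of_pos ht,
        hunorm p q hpq, mul_one]
  -- a is on the frontier of Ω, not in Γ
  have hdiafr : ∀ p q : EuclideanSpace ℝ (Fin d), p ∈ K → q ∈ K → dist p q = D →
      p ∈ frontier Ω := by
    intro p q hp hq hpq
    rw [hΩo.frontier_eq]
    refine ⟨hp, fun hpΩ => ?_⟩
    obtain ⟨ε, hε, hball⟩ := Metric.isOpen_iff.mp hΩo p hpΩ
    have h := hray p q hp hq hpq (ε/2) (by positivity)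
    refine h.1 (hΩK (hball ?_))
    rw [mem_ball, h.2]
    linarith
  have hafr : a ∈ frontier Ω := hdiafr a b haK hbK habD
  have haΓ : a ∉ Γ := fun h => hnotΓ a h haω
  -- radii and geometric constants
  obtain ⟨R₀, hR₀⟩ := hKb.subset_closedBall 0
  set R := max R₀ 0 with hRdef
  have hR0 : 0 ≤ R := le_max_right _ _
  have hRK : K ⊆ closedBall 0 R := hR₀.trans (closedBall_subset_closedBall (le_max_left _ _))
  have hnormK : ∀ p ∈ K, ‖p‖ ≤ R := fun p hp => mem_closedBall_zero_iff.mp (hRK hp)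
  set T : ℝ := 2*R + 3 with hTdef
  set R' : ℝ := R + 1 with hR'def
  set M : ℝ := 2*R + T + 10 with hMdef
  set uA := D⁻¹ • (a - b) with huAdef
  set uX := D⁻¹ • (x - y) with huXdef
  set segA := (fun t : ℝ => a + t • uA) '' Ioc (0:ℝ) T with hsegAdef
  set segX := (fun t : ℝ => x + t • uX) '' Ioc (0:ℝ) T with hsegXdef
  set S := sphere (0 : EuclideanSpace ℝ (Fin d)) R' with hSdef
  set O := ball (0 : EuclideanSpace ℝ (Fin d)) M ∩ Kᶜ with hOdef
  have hOopen : IsOpen O := isOpen_ball.inter hKc.isClosed.isOpen_compl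
  have hsegA_O : segA ⊆ O := by
    rintro p ⟨t, ⟨ht0, htT⟩, rfl⟩
    constructor
    · rw [mem_ball_zero_iff]
      calc ‖a + t • uA‖ ≤ ‖a‖ + ‖t • uA‖ := norm_add_le _ _
      _ = ‖a‖ + t := by
          rw [norm_smul, Real.norm_eq_abs, _root_.abs_of_pos ht0, hunorm a b habD, mul_one]
      _ ≤ R + T := add_le_add (hnormK a haK) htT
      _ < M := by rw [hMdef]; linarith
    · exact (hray a b haK hbK habD t ht0).1
  have hsegX_O : segX ⊆ O := by
    rintro p ⟨t, ⟨ht0, htT⟩, rfl⟩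
    constructor
    · rw [mem_ball_zero_iff]
      calc ‖x + t • uX‖ ≤ ‖x‖ + ‖t • uX‖ := norm_add_le _ _
      _ = ‖x‖ + t := by
          rw [norm_smul, Real.norm_eq_abs, _root_.abs_of_pos ht0, hunorm x y hxyD, mul_one]
      _ ≤ R + T := add_le_add (hnormK x hxK) htT
      _ < M := by rw [hMdef]; linarith
    · exact (hray x y hxK hyK hxyD t ht0).1
  have hS_O : S ⊆ O := by
    intro p hp
    rw [hSdef, mem_sphere_zero_iff_norm] at hp
    constructor
    · rw [mem_ball_zero_iff, hp, hR'def, hMdef]; linarith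
    · intro hpK
      have := hnormK p hpK
      rw [hp, hR'def] at this
      linarith
  -- intersection of the rays with the sphere
  have hIVT : ∀ (p u : EuclideanSpace ℝ (Fin d)), ‖p‖ ≤ R → ‖u‖ = 1 →
      ∃ t, t ∈ Icc (1/2 : ℝ) T ∧ ‖p + t • u‖ = R' := by
    intro p u hp hu
    have hcont : ContinuousOn (fun t : ℝ => ‖p + t • u‖) (Icc (1/2) T) :=
      (continuous_norm.comp (continuous_const.add (continuous_id.smul
        continuous_const))).continuousOn
    have h12T : (1/2 : ℝ) ≤ T := by rw [hTdef]; linarith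
    have hlow : ‖p + (1/2 : ℝ) • u‖ ≤ R + 1/2 := by
      calc ‖p + (1/2:ℝ) • u‖ ≤ ‖p‖ + ‖(1/2:ℝ) • u‖ := norm_add_le _ _
      _ = ‖p‖ + 1/2 := by rw [norm_smul, Real.norm_eq_abs, hu]; norm_num
      _ ≤ R + 1/2 := by linarith
    have hhigh : T - R ≤ ‖p + (T:ℝ) • u‖ := by
      have h1 : ‖(T:ℝ) • u‖ ≤ ‖p + T • u‖ + ‖p‖ := by
        calc ‖(T:ℝ) • u‖ = ‖(p + T • u) - p‖ := by rw [add_sub_cancel_left]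
        _ ≤ ‖p + T • u‖ + ‖p‖ := norm_sub_le _ _
      have h2 : ‖(T:ℝ) • u‖ = T := by
        rw [norm_smul, Real.norm_eq_abs, hu, mul_one, _root_.abs_of_pos (by rw [hTdef]; linarith)]
      linarith
    have hmemIcc : R' ∈ Icc (‖p + (1/2:ℝ) • u‖) (‖p + (T:ℝ) • u‖) := by
      constructor
      · rw [hR'def]; linarith
      · rw [hR'def]
        have : T - R = R + 3 := by rw [hTdef]; ring
        linarith
    obtain ⟨t, ht, hft⟩ := intermediate_value_Icc h12T hcont hmemIcc
    exact ⟨t, ht, hft⟩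
  obtain ⟨tA, htA, htAR⟩ := hIVT a uA (hnormK a haK) (hunorm a b habD)
  obtain ⟨tX, htX, htXR⟩ := hIVT x uX (hnormK x hxK) (hunorm x y hxyD)
  have htA0 : (0:ℝ) < tA := by linarith [htA.1]
  have htX0 : (0:ℝ) < tX := by linarith [htX.1]
  set pA := a + tA • uA with hpAdef
  set pX := x + tX • uX with hpXdef
  have hpAsegA : pA ∈ segA := ⟨tA, ⟨htA0, htA.2⟩, rfl⟩
  have hpXsegX : pX ∈ segX := ⟨tX, ⟨htX0, htX.2⟩, rfl⟩
  have hpAS : pA ∈ S := by rw [hSdef, mem_sphere_zero_iff_norm]; exact htAR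
  have hpXS : pX ∈ S := by rw [hSdef, mem_sphere_zero_iff_norm]; exact htXR
  -- the connected set G
  have hrank : 1 < Module.rank ℝ (EuclideanSpace ℝ (Fin d)) := by
    have h1 : 1 < Module.finrank ℝ (EuclideanSpace ℝ (Fin d)) := by
      rw [finrank_euclideanSpace_fin]; exact hd
    rw [← Module.finrank_eq_rank]
    exact_mod_cast h1
  have hS_pre : IsPreconnected S := isPreconnected_sphere hrank 0 R'
  have hsegA_pre : IsPreconnected segA :=
    isPreconnected_Ioc.image _ ((continuous_const.add (continuous_id.smul
      continuous_const)).continuousOn)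
  have hsegX_pre : IsPreconnected segX :=
    isPreconnected_Ioc.image _ ((continuous_const.add (continuous_id.smul
      continuous_const)).continuousOn)
  set G := (segA ∪ S) ∪ segX with hGdef
  have hG_pre : IsPreconnected G := by
    apply IsPreconnected.union pX (Or.inr hpXS) hpXsegX _ hsegX_pre
    exact IsPreconnected.union pA hpAsegA hpAS hsegA_pre hS_pre
  have hGO : G ⊆ O := union_subset (union_subset hsegA_O hS_O) hsegX_O
  have hpAG : pA ∈ G := Or.inl (Or.inl hpAsegA)
  set W := connectedComponentIn O pA with hWdef
  have hGW : G ⊆ W := hG_pre.subset_connectedComponentIn hpAG hGO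
  have hpAO : pA ∈ O := hGO hpAG
  have hWconn : IsConnected W := isConnected_connectedComponentIn_iff.mpr hpAO
  have hWopen : IsOpen W := hOopen.connectedComponentIn
  have hWO : W ⊆ O := connectedComponentIn_subset _ _
  -- a and x are in the closure of W
  have hclW : ∀ (p u : EuclideanSpace ℝ (Fin d)), ‖u‖ = 1 →
      (∀ t : ℝ, t ∈ Ioc (0:ℝ) T → p + t • u ∈ W) → p ∈ closure W := by
    intro p u hu hmem
    rw [Metric.mem_closure_iff]
    intro ε hε
    set t := min (ε/2) (1/2) with htdef
    have ht0 : 0 < t := lt_min (by positivity) (by norm_num)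
    have htT : t ≤ T := le_trans (min_le_right _ _) (by rw [hTdef]; linarith)
    refine ⟨p + t • u, hmem t ⟨ht0, htT⟩, ?_⟩
    rw [dist_comm, dist_eq_norm, add_sub_cancel_left, norm_smul, Real.norm_eq_abs,
      _root_.abs_of_pos ht0, hu, mul_one]
    calc t ≤ ε/2 := min_le_left _ _
    _ < ε := by linarith
  have ha_cl : a ∈ closure W := by
    apply hclW a uA (hunorm a b habD)
    intro t ht
    exact hGW (Or.inl (Or.inl ⟨t, ht, rfl⟩))
  have hx_cl : x ∈ closure W := by
    apply hclW x uX (hunorm x y hxyD)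
    intro t ht
    exact hGW (Or.inr ⟨t, ht, rfl⟩)
  -- frontier of W analysis
  have hfrW : ∀ q, q ∈ closure W → q ∉ W → (q ∈ K ∨ M - 1 ≤ ‖q‖) := by
    intro q hq1 hq2
    by_contra hcon
    push_neg at hcon
    obtain ⟨hqK, hqM⟩ := hcon
    have hqO : q ∈ O := ⟨mem_ball_zero_iff.mpr (by linarith), hqK⟩
    have hVopen : IsOpen (connectedComponentIn O q) := hOopen.connectedComponentIn
    obtain ⟨w, hwV, hwW⟩ := _root_.mem_closure_iff.mp hq1 _ hVopen (mem_connectedComponentIn hqO)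
    have h1 : W = connectedComponentIn O w := connectedComponentIn_eq hwW
    have h2 : connectedComponentIn O q = connectedComponentIn O w := connectedComponentIn_eq hwV
    exact hq2 (by rw [h1, ← h2]; exact mem_connectedComponentIn hqO)
  have hWfr : ∀ q, q ∈ closure W → q ∉ W → q ∈ K → q ∈ frontier Ω := by
    intro q hq1 hq2 hqK
    rw [hΩo.frontier_eq]
    refine ⟨hqK, fun hqΩ => ?_⟩
    obtain ⟨w, hw1, hw2⟩ := _root_.mem_closure_iff.mp hq1 _ hΩo hqΩ
    exact (hWO hw2).2 (hΩK hw1)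
  -- clopen separation of the frontier
  have hxfr : x ∈ frontier Ω := hΓsub hxΓ
  have hΓx : Γ = connectedComponentIn (frontier Ω) x := by
    rw [hΓdef]
    exact connectedComponentIn_eq (hΓdef ▸ hxΓ)
  have hΓimx : Γ = Subtype.val '' connectedComponent (⟨x, hxfr⟩ : ↥(frontier Ω)) :=
    hΓx.trans (connectedComponentIn_eq_image hxfr)
  have hanot : (⟨a, hafr⟩ : ↥(frontier Ω)) ∉ connectedComponent (⟨x, hxfr⟩ : ↥(frontier Ω)) := by
    intro h
    exact haΓ (by rw [hΓimx]; exact ⟨_, h, rfl⟩)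
  rw [connectedComponent_eq_iInter_isClopen] at hanot
  simp only [Set.mem_iInter, not_forall] at hanot
  obtain ⟨⟨Z, hZclopen, hxZ⟩, haZ⟩ := hanot
  set P₀ := (Subtype.val : ↥(frontier Ω) → EuclideanSpace ℝ (Fin d)) '' Z with hP₀def
  set Q₀ := (Subtype.val : ↥(frontier Ω) → EuclideanSpace ℝ (Fin d)) '' Zᶜ with hQ₀def
  have hP₀c : IsCompact P₀ := (hZclopen.isClosed.isCompact).image continuous_subtype_val
  have hQ₀c : IsCompact Q₀ := (hZclopen.compl.isClosed.isCompact).image continuous_subtype_val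
  have hxP₀ : x ∈ P₀ := ⟨⟨x, hxfr⟩, hxZ, rfl⟩
  have haQ₀ : a ∈ Q₀ := ⟨⟨a, hafr⟩, haZ, rfl⟩
  have hfrPQ : ∀ q, q ∈ frontier Ω → q ∈ P₀ ∨ q ∈ Q₀ := by
    intro q hq
    rcases em ((⟨q, hq⟩ : ↥(frontier Ω)) ∈ Z) with h | h
    · exact Or.inl ⟨⟨q, hq⟩, h, rfl⟩
    · exact Or.inr ⟨⟨q, hq⟩, h, rfl⟩
  have hP₀sub : P₀ ⊆ frontier Ω := by rintro p ⟨u, _, rfl⟩; exact u.2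
  have hQ₀sub : Q₀ ⊆ frontier Ω := by rintro p ⟨u, _, rfl⟩; exact u.2
  -- Urysohn function
  set Far := {z : EuclideanSpace ℝ (Fin d) | M - 1 ≤ ‖z‖} with hFardef
  have hFarcl : IsClosed Far := isClosed_le continuous_const continuous_norm
  have hdisjC : Disjoint (P₀ ∪ Far) Q₀ := by
    rw [Set.disjoint_union_left]
    constructor
    · rw [Set.disjoint_left]
      rintro p ⟨u, hu, rfl⟩ ⟨v, hv, hvp⟩
      rw [Subtype.val_injective hvp] at hv
      exact hv hu
    · rw [Set.disjoint_left]
      intro p hp hpQ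
      have h1 : ‖p‖ ≤ R := hnormK p (hfrK (hQ₀sub hpQ))
      have h2 : M - 1 ≤ ‖p‖ := hp
      rw [hMdef, hTdef] at h2
      linarith
  obtain ⟨f, hf0, hf1, hf01⟩ :=
    exists_continuous_zero_one_of_isClosed (hP₀c.isClosed.union hFarcl) hQ₀c.isClosed hdisjC
  have hfx : f x = 0 := hf0 (Or.inl hxP₀)
  have hfa : f a = 1 := hf1 haQ₀
  -- the circle-valued map g
  set g : EuclideanSpace ℝ (Fin d) → Circle :=
    Set.piecewise (closure W) (fun z => Circle.exp (Real.pi * f z))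
      (fun z => Circle.exp (-(Real.pi * f z))) with hgdef
  have hagree : ∀ q, q ∈ closure W → q ∉ W →
      Circle.exp (Real.pi * f q) = Circle.exp (-(Real.pi * f q)) := by
    intro q hq1 hq2
    have hval : f q = 0 ∨ f q = 1 := by
      rcases hfrW q hq1 hq2 with hqK | hqFar
      · rcases hfrPQ q (hWfr q hq1 hq2 hqK) with h | h
        · exact Or.inl (hf0 (Or.inl h))
        · exact Or.inr (hf1 h)
      · exact Or.inl (hf0 (Or.inr hqFar))
    rcases hval with h | h <;> rw [h]
    · norm_num
    · rw [mul_one]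
      exact Circle.exp_eq_exp.mpr ⟨1, by ring⟩
  have hgcont : Continuous g := by
    apply Continuous.piecewise
    · intro q hq
      have hq' : q ∈ closure W ∧ q ∉ W := by
        have h1 : frontier (closure W) ⊆ closure W \ W := by
          rw [isClosed_closure.frontier_eq]
          exact diff_subset_diff_right (interior_maximal subset_closure hWopen)
        exact h1 hq
      exact hagree q hq'.1 hq'.2
    · exact Circle.exp.continuous.comp (continuous_const.mul f.continuous)
    · exact Circle.exp.continuous.comp ((continuous_const.mul f.continuous).neg)
  obtain ⟨θ, hθcont, hθexp⟩ := exists_circle_lift hgcont M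
  have hWcb : closure W ⊆ closedBall 0 M := by
    have h1 : W ⊆ ball (0 : EuclideanSpace ℝ (Fin d)) M := fun p hp => (hWO hp).1
    exact (closure_mono h1).trans closure_ball_subset_closedBall
  have hKcb : K ⊆ closedBall 0 M := by
    refine hRK.trans (closedBall_subset_closedBall ?_)
    rw [hMdef, hTdef]; linarith
  -- value of g on K
  have hgK : ∀ z ∈ K, g z = Circle.exp (-(Real.pi * f z)) := by
    intro z hz
    by_cases hzW : z ∈ closure W
    · rw [hgdef, Set.piecewise_eq_of_mem _ _ _ hzW]
      exact hagree z hzW (fun h => (hWO h).2 hz)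
    · rw [hgdef, Set.piecewise_eq_of_notMem _ _ _ hzW]
  -- the two constancy statements
  have hq1 : ∀ z ∈ closure W, ∃ m : ℤ, θ z - Real.pi * f z = m * (2 * Real.pi) := by
    intro z hz
    apply Circle.exp_eq_one.mp
    rw [Circle.exp_sub, hθexp z (hWcb hz), hgdef, Set.piecewise_eq_of_mem _ _ _ hz, div_self']
  have hq2 : ∀ z ∈ K, ∃ m : ℤ, θ z + Real.pi * f z = m * (2 * Real.pi) := by
    intro z hz
    apply Circle.exp_eq_one.mp
    rw [Circle.exp_add, hθexp z (hKcb hz), hgK z hz, ← Circle.exp_add]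
    rw [neg_add_cancel, Circle.exp_zero]
  have hA1 : θ a - Real.pi * f a = θ x - Real.pi * f x := by
    apply twopi_int_eq ((hWconn.isPreconnected.closure).image _
      ((hθcont.mono hWcb).sub ((continuous_const.mul f.continuous).continuousOn)))
    · rintro q ⟨z, hz, rfl⟩
      exact hq1 z hz
    · exact ⟨a, ha_cl, rfl⟩
    · exact ⟨x, hx_cl, rfl⟩
  have hA2 : θ a + Real.pi * f a = θ x + Real.pi * f x := by
    apply twopi_int_eq ((hKconn.isPreconnected).image _
      ((hθcont.mono hKcb).add ((continuous_const.mul f.continuous).continuousOn)))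
    · rintro q ⟨z, hz, rfl⟩
      exact hq2 z hz
    · exact ⟨a, haK, rfl⟩
    · exact ⟨x, hxK, rfl⟩
  rw [hfa, hfx, mul_one, mul_zero, sub_zero] at hA1
  rw [hfa, hfx, mul_one, mul_zero, add_zero] at hA2
  have := Real.pi_pos
  linarith

end mainaux

/-- If ω₁, ω₂ are disjoint bounded open subsets of ℝ^d isometric to each other,
Ω is a bounded connected open set with closure Ω = closure ω₁ ∪ closure ω₂,
and Γ is a connected component of ∂Ω with diam Γ = diam Ω, then Γ meets both
∂ω₁ and ∂ω₂, and there is a point z ∈ ∂ω₁ ∩ ∂ω₂ ∩ Γ. -/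
theorem stmt_13 {d : ℕ} (Ω ω₁ ω₂ Γ : Set (EuclideanSpace ℝ (Fin d)))
    (hΩo : IsOpen Ω) (hΩc : IsConnected Ω) (hΩb : Bornology.IsBounded Ω)
    (h1o : IsOpen ω₁) (h2o : IsOpen ω₂)
    (h1b : Bornology.IsBounded ω₁) (h2b : Bornology.IsBounded ω₂)
    (hdisj : Disjoint ω₁ ω₂)
    (hiso : ∃ e : EuclideanSpace ℝ (Fin d) ≃ᵢ EuclideanSpace ℝ (Fin d),
      e '' ω₁ = ω₂)
    (hclos : closure Ω = closure ω₁ ∪ closure ω₂)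
    (hΓ : ∃ z ∈ frontier Ω, Γ = connectedComponentIn (frontier Ω) z)
    (hdiam : Metric.diam Γ = Metric.diam Ω) :
    (Γ ∩ frontier ω₁).Nonempty ∧ (Γ ∩ frontier ω₂).Nonempty ∧
      (frontier ω₁ ∩ frontier ω₂ ∩ Γ).Nonempty := by
  classical
  obtain ⟨x₀, hx₀, hΓdef⟩ := hΓ
  -- the space is nontrivial
  haveI hnt : Nontrivial (EuclideanSpace ℝ (Fin d)) := by
    rcases subsingleton_or_nontrivial (EuclideanSpace ℝ (Fin d)) with hss | hnt
    · exfalso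
      obtain ⟨p, hp⟩ := hΩc.nonempty
      have huniv : Ω = Set.univ := by
        ext q
        simp only [Set.mem_univ, iff_true]
        rwa [Subsingleton.elim q p]
      rw [huniv, frontier_univ] at hx₀
      exact hx₀
    · exact hnt
  -- diam Ω > 0
  have hD : 0 < Metric.diam Ω := by
    obtain ⟨p, hp⟩ := hΩc.nonempty
    obtain ⟨ε, hε, hball⟩ := Metric.isOpen_iff.mp hΩo p hp
    obtain ⟨v, hv⟩ := exists_ne (0 : EuclideanSpace ℝ (Fin d))
    have hvn : 0 < ‖v‖ := norm_pos_iff.mpr hv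
    set w := (ε / (2 * ‖v‖)) • v with hwdef
    have hwn : ‖w‖ = ε/2 := by
      rw [hwdef, norm_smul, Real.norm_eq_abs, _root_.abs_of_pos (by positivity)]
      field_simp
    have hpw : p + w ∈ Ω := by
      apply hball
      rw [mem_ball, dist_eq_norm, add_sub_cancel_left, hwn]
      linarith
    have h1 := Metric.dist_le_diam_of_mem hΩb hpw hp
    rw [dist_eq_norm, add_sub_cancel_left, hwn] at h1
    linarith
  -- common facts about Γ
  have hΓsub : Γ ⊆ frontier Ω := hΓdef ▸ connectedComponentIn_subset _ _
  have hΓconn : IsConnected Γ := hΓdef ▸ isConnected_connectedComponentIn_iff.mpr hx₀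
  have hfrc : IsCompact (frontier Ω) :=
    Metric.isCompact_of_isClosed_isBounded isClosed_frontier
      (hΩb.closure.subset frontier_subset_closure)
  haveI : CompactSpace ↥(frontier Ω) := isCompact_iff_compactSpace.mp hfrc
  have hΓim : Γ = Subtype.val '' connectedComponent (⟨x₀, hx₀⟩ : ↥(frontier Ω)) :=
    hΓdef.trans (connectedComponentIn_eq_image hx₀)
  have hΓcomp : IsCompact Γ := by
    rw [hΓim]
    exact (isClosed_connectedComponent.isCompact).image continuous_subtype_val
  have hΓne : Γ.Nonempty := ⟨x₀, hΓdef ▸ mem_connectedComponentIn hx₀⟩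
  -- main nonemptiness claims
  have hmain : (Γ ∩ closure ω₁).Nonempty ∧ (Γ ∩ closure ω₂).Nonempty := by
    rcases lt_or_ge d 2 with hd2 | hd2
    · -- dimension 0 or 1 : the hypotheses are contradictory
      exfalso
      obtain ⟨x, hxΓ, y, hyΓ, hxy⟩ := exists_dist_eq_diam' hΓcomp hΓne
      have hxyD : dist x y = Metric.diam Ω := by rw [hxy, hdiam]
      have hxy_ne : x ≠ y := by
        intro h
        rw [h, dist_self] at hxyD
        exact absurd hxyD.symm (ne_of_gt hD)
      interval_cases d
      · refine absurd ?_ (not_subsingleton (EuclideanSpace ℝ (Fin 0)))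
        refine ⟨fun f g => ?_⟩
        ext i
        exact i.elim0
      · -- d = 1 : a connected subset of a frontier has at most one point
        set Φ := (EuclideanSpace.equiv (Fin 1) ℝ).trans
          (ContinuousLinearEquiv.funUnique (Fin 1) ℝ ℝ) with hΦdef
        have hs : IsPreconnected (⇑Φ '' Γ) :=
          hΓconn.isPreconnected.image _ (Φ.continuous.continuousOn)
        have hΦne : Φ x ≠ Φ y := fun h => hxy_ne (Φ.injective h)
        obtain ⟨l, r, hlr, hIoo⟩ : ∃ l r : ℝ, l < r ∧ Ioo l r ⊆ ⇑Φ '' Γ := by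
          rcases hΦne.lt_or_gt with h | h
          · exact ⟨Φ x, Φ y, h,
              subset_trans Ioo_subset_Icc_self (hs.Icc_subset ⟨x, hxΓ, rfl⟩ ⟨y, hyΓ, rfl⟩)⟩
          · exact ⟨Φ y, Φ x, h,
              subset_trans Ioo_subset_Icc_self (hs.Icc_subset ⟨y, hyΓ, rfl⟩ ⟨x, hxΓ, rfl⟩)⟩
        set V := ⇑Φ ⁻¹' (Ioo l r) with hVdef
        have hVopen : IsOpen V := isOpen_Ioo.preimage Φ.continuous
        have hVΓ : V ⊆ Γ := by
          intro v hv
          obtain ⟨γ, hγΓ, hγv⟩ := hIoo hv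
          rwa [← Φ.injective hγv]
        have hVne : Φ.symm ((l + r)/2) ∈ V := by
          rw [hVdef, Set.mem_preimage, Φ.apply_symm_apply, Set.mem_Ioo]
          constructor <;> linarith
        obtain ⟨u, huV, huΩ⟩ := _root_.mem_closure_iff.mp
          (frontier_subset_closure (hΓsub (hVΓ hVne))) V hVopen hVne
        have hufr : u ∈ frontier Ω := hΓsub (hVΓ huV)
        rw [hΩo.frontier_eq] at hufr
        exact hufr.2 huΩ
    · -- dimension at least 2 : the main argument
      have hd : 1 < d := hd2
      obtain ⟨e, he⟩ := hiso
      have hdiameq : Metric.diam ω₁ = Metric.diam ω₂ := by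
        rw [← he, e.isometry.diam_image]
      constructor
      · rcases Set.eq_empty_or_nonempty (Γ ∩ closure ω₁) with h | h
        · exact absurd (main_aux hd Ω ω₁ ω₂ Γ hΩo hΩc hΩb hclos hdiameq
            ⟨x₀, hx₀, hΓdef⟩ hdiam hD h) (fun hf => hf)
        · exact h
      · rcases Set.eq_empty_or_nonempty (Γ ∩ closure ω₂) with h | h
        · refine absurd (main_aux hd Ω ω₂ ω₁ Γ hΩo hΩc hΩb ?_ hdiameq.symm
            ⟨x₀, hx₀, hΓdef⟩ hdiam hD h) (fun hf => hf)
          rw [hclos, Set.union_comm]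
        · exact h
  obtain ⟨h₁, h₂⟩ := hmain
  -- extraction of the common point
  have hcover : Γ ⊆ closure ω₁ ∪ closure ω₂ := fun p hp =>
    hclos ▸ frontier_subset_closure (hΓsub hp)
  obtain ⟨z, hzΓ, hz1, hz2⟩ : ∃ z, z ∈ Γ ∧ z ∈ closure ω₁ ∧ z ∈ closure ω₂ := by
    obtain ⟨z, hz⟩ := (isPreconnected_closed_iff.mp hΓconn.isPreconnected)
      (closure ω₁) (closure ω₂) isClosed_closure isClosed_closure hcover h₁ h₂
    exact ⟨z, hz.1, hz.2.1, hz.2.2⟩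
  have hz1' : z ∉ ω₁ := by
    intro h
    obtain ⟨w, hw1, hw2⟩ := _root_.mem_closure_iff.mp hz2 _ h1o h
    exact Set.disjoint_left.mp hdisj hw1 hw2
  have hz2' : z ∉ ω₂ := by
    intro h
    obtain ⟨w, hw1, hw2⟩ := _root_.mem_closure_iff.mp hz1 _ h2o h
    exact Set.disjoint_left.mp hdisj hw2 hw1
  have hzf1 : z ∈ frontier ω₁ := by
    have heq : frontier ω₁ = closure ω₁ \ ω₁ := by
      rw [frontier, h1o.interior_eq]
    rw [heq]
    exact ⟨hz1, hz1'⟩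
  have hzf2 : z ∈ frontier ω₂ := by
    have heq : frontier ω₂ = closure ω₂ \ ω₂ := by
      rw [frontier, h2o.interior_eq]
    rw [heq]
    exact ⟨hz2, hz2'⟩
  exact ⟨⟨z, hzΓ, hzf1⟩, ⟨z, hzΓ, hzf2⟩, ⟨z, ⟨hzf1, hzf2⟩, hzΓ⟩⟩
end

section
/- Let H₁ = L²(Ω₁), H₂ = L²(Ω₂) for bounded connected open sets Ω_j ⊆ ℝ^d, let A_j be self-adjoint, bounded below, with compact resolvent on H_j, generating positive irreducible semigroups S_j(t) = e^{-tA_j}, and let ψ_j ≫ 0 be the normalized principal eigenfunction for the principal eigenvalue λ₁(A_j). Assume λ₁(A₁) = λ₁(A₂) =: λ₁. If 0 ≠ U : H₁ → H₂ is a bounded disjointness-preserving operator with U S₁(t) = S₂(t) U for all t ≥ 0, then Uψ₁ is a nonzero eigenfunction of A₂ for the eigenvalue λ₁; moreover the modulus operator |U| also intertwines: |U| S₁(t) = S₂(t) |U| for all t ≥ 0. -/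
open MeasureTheory
open scoped RealInnerProductSpace

section Aux
variable {α : Type*} [MeasurableSpace α] {μ : Measure α}

lemma lp_inner_nonneg (f g : Lp ℝ 2 μ) (hf : 0 ≤ f) (hg : 0 ≤ g) : (0:ℝ) ≤ ⟪f, g⟫ := by
  rw [MeasureTheory.L2.inner_def]
  refine integral_nonneg_of_ae ?_
  filter_upwards [(Lp.coeFn_nonneg f).2 hf, (Lp.coeFn_nonneg g).2 hg] with x h1 h2
  simpa [RCLike.inner_apply] using mul_nonneg h2 h1

/-- If `v ≥ 0`, `w > 0` a.e. and `⟪v, w⟫ = 0` then `v = 0`. -/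
lemma lp_eq_zero_of_inner_eq_zero (v w : Lp ℝ 2 μ) (hv : 0 ≤ v)
    (hw : ∀ᵐ x ∂μ, 0 < w x) (h : ⟪v, w⟫ = (0:ℝ)) : v = 0 := by
  have hint : Integrable (fun x => v x * w x) μ := by
    simpa [RCLike.inner_apply] using MeasureTheory.L2.integrable_inner (𝕜 := ℝ) w v
  have hinner : ∫ x, v x * w x ∂μ = 0 := by
    rw [MeasureTheory.L2.inner_def] at h
    simpa [RCLike.inner_apply, mul_comm] using h
  have hnn : 0 ≤ᵐ[μ] fun x => v x * w x := by
    filter_upwards [(Lp.coeFn_nonneg v).2 hv, hw] with x h1 h2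
    exact mul_nonneg h1 h2.le
  have hzero : (fun x => v x * w x) =ᵐ[μ] 0 :=
    (integral_eq_zero_iff_of_nonneg_ae hnn hint).mp hinner
  refine Lp.ext ?_
  filter_upwards [hzero, hw, Lp.coeFn_zero ℝ 2 μ] with x h1 h2 h3
  rw [h3]
  have : v x * w x = 0 := h1
  rcases mul_eq_zero.mp this with h | h
  · exact h
  · exact absurd h h2.ne'

/-- A dual-positivity criterion: if `⟪f, g⟫ ≥ 0` for all `f ≥ 0`, then `g ≥ 0`. -/
lemma lp_nonneg_of_forall_inner (g : Lp ℝ 2 μ)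
    (h : ∀ f : Lp ℝ 2 μ, 0 ≤ f → (0:ℝ) ≤ ⟪f, g⟫) : 0 ≤ g := by
  have hn : (0:Lp ℝ 2 μ) ≤ g⁻ := negPart_nonneg g
  have h1 : (0:ℝ) ≤ ⟪g⁻, g⟫ := h _ hn
  have hint : Integrable (fun x => (g⁻ : Lp ℝ 2 μ) x * g x) μ := by
    simpa [RCLike.inner_apply] using MeasureTheory.L2.integrable_inner (𝕜 := ℝ) g (g⁻)
  have hval : ⟪g⁻, g⟫ = ∫ x, (g⁻ : Lp ℝ 2 μ) x * g x ∂μ := by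
    rw [MeasureTheory.L2.inner_def]; simp [RCLike.inner_apply, mul_comm]
  -- pointwise description of the negative part
  have hcoe : ∀ᵐ x ∂μ, (g⁻ : Lp ℝ 2 μ) x = (-(g x)) ⊔ 0 := by
    have h2 : (g⁻ : Lp ℝ 2 μ) = (-g) ⊔ 0 := rfl
    rw [h2]
    filter_upwards [Lp.coeFn_sup (-g) 0, Lp.coeFn_neg g, Lp.coeFn_zero ℝ 2 μ] with x hx h3 h4
    simp only [hx, Pi.sup_apply, h3, Pi.neg_apply, h4, Pi.zero_apply]
  have hle : ∀ᵐ x ∂μ, (fun x => -((g⁻ : Lp ℝ 2 μ) x * g x)) x ≥ 0 := by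
    filter_upwards [hcoe] with x hx
    simp only [hx]
    rcases le_or_gt 0 (g x) with hg | hg
    · rw [sup_eq_right.mpr (by linarith : -(g x) ≤ 0)]
      simp
    · rw [sup_eq_left.mpr (by linarith : (0:ℝ) ≤ -(g x))]
      nlinarith
  have hile : ∫ x, -((g⁻ : Lp ℝ 2 μ) x * g x) ∂μ = 0 := by
    have := integral_neg (f := fun x => (g⁻ : Lp ℝ 2 μ) x * g x) (μ := μ)
    rw [this]
    have h0 : ∫ x, (g⁻ : Lp ℝ 2 μ) x * g x ∂μ ≥ 0 := by rw [← hval]; exact h1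
    have h0' : ∫ x, -((g⁻ : Lp ℝ 2 μ) x * g x) ∂μ ≥ 0 := integral_nonneg_of_ae hle
    rw [integral_neg] at h0'
    linarith
  have hzero : (fun x => -((g⁻ : Lp ℝ 2 μ) x * g x)) =ᵐ[μ] 0 :=
    (integral_eq_zero_iff_of_nonneg_ae hle hint.neg).mp hile
  rw [← Lp.coeFn_nonneg]
  filter_upwards [hzero, hcoe] with x h2 h3
  simp only [Pi.zero_apply] at h2 ⊢
  by_contra hneg
  push_neg at hneg
  have h4 : (g⁻ : Lp ℝ 2 μ) x = -(g x) := by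
    rw [h3, sup_eq_left.mpr (by linarith : (0:ℝ) ≤ -(g x))]
  rw [h4] at h2
  nlinarith

end Aux

section Kill
variable {α β : Type*} [MeasurableSpace α] [MeasurableSpace β] {μ : Measure α} {ν : Measure β}

/-- A positive operator vanishing on an a.e. strictly positive function vanishes. -/
lemma kill_pos_op (T : Lp ℝ 2 μ →L[ℝ] Lp ℝ 2 ν) (hT : ∀ f, 0 ≤ f → 0 ≤ T f)
    (ψ : Lp ℝ 2 μ) (hψ : ∀ᵐ x ∂μ, 0 < ψ x) (hTψ : T ψ = 0) : T = 0 := by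
  set A := ContinuousLinearMap.adjoint T with hA
  have hAzero : ∀ h : Lp ℝ 2 ν, 0 ≤ h → A h = 0 := by
    intro h hh
    have hApos : 0 ≤ A h := by
      refine lp_nonneg_of_forall_inner _ (fun f hf => ?_)
      rw [ContinuousLinearMap.adjoint_inner_right]
      exact lp_inner_nonneg _ _ (hT f hf) hh
    refine lp_eq_zero_of_inner_eq_zero (A h) ψ hApos hψ ?_
    have : ⟪ψ, A h⟫ = (0:ℝ) := by
      rw [ContinuousLinearMap.adjoint_inner_right, hTψ, inner_zero_left]
    rw [real_inner_comm] at this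
    exact this
  have hAall : ∀ h : Lp ℝ 2 ν, A h = 0 := by
    intro h
    have := hAzero h⁺ (posPart_nonneg h)
    have h2 := hAzero h⁻ (negPart_nonneg h)
    calc A h = A (h⁺ - h⁻) := by rw [posPart_sub_negPart]
    _ = A h⁺ - A h⁻ := map_sub _ _ _
    _ = 0 := by rw [this, h2, sub_zero]
  refine ContinuousLinearMap.ext fun f => ?_
  have : ⟪T f, T f⟫ = (0:ℝ) := by
    rw [← ContinuousLinearMap.adjoint_inner_right, hAall, inner_zero_right]
  simpa using inner_self_eq_zero.mp this

/-- positivity gives `|T g| ≤ T |g|`. -/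
lemma abs_map_le (T : Lp ℝ 2 μ →L[ℝ] Lp ℝ 2 ν) (hT : ∀ f, 0 ≤ f → 0 ≤ T f)
    (g : Lp ℝ 2 μ) : |T g| ≤ T |g| := by
  rw [abs_le']
  constructor
  · have h2 : 0 ≤ T (|g| - g) := hT _ (sub_nonneg.2 (le_abs_self g))
    rw [map_sub] at h2
    exact sub_nonneg.mp h2
  · have hg : 0 ≤ |g| + g := by
      have h := neg_le.1 (neg_le_abs g)
      rw [← sub_nonneg, sub_neg_eq_add] at h
      rw [add_comm]; exact h
    have h1 : 0 ≤ T (|g| + g) := hT _ hg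
    rw [map_add] at h1
    rw [← sub_nonneg, sub_neg_eq_add]
    exact h1

lemma lp_abs_smul (c : ℝ) (hc : 0 ≤ c) (f : Lp ℝ 2 μ) : |c • f| = c • |f| := by
  refine Lp.ext ?_
  filter_upwards [Lp.coeFn_abs (c • f), Lp.coeFn_smul c f, Lp.coeFn_smul c |f|,
    Lp.coeFn_abs f] with x h1 h2 h3 h4
  rw [h1, h2, h3]
  simp only [Pi.smul_apply, smul_eq_mul, h4]
  rw [abs_mul, abs_of_nonneg hc]

end Kill




set_option maxHeartbeats 1000000 in
/-- Abstract L² result: if S₁, S₂ are positive irreducible self-adjoint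
semigroups on L²(Ω₁), L²(Ω₂) with common principal eigenvalue λ₁ and a.e.
positive normalized principal eigenfunctions ψ₁, ψ₂, and 0 ≠ U is a bounded
disjointness-preserving operator intertwining S₁ and S₂, then Uψ₁ is a nonzero
eigenfunction of the generator of S₂ for λ₁ (i.e. S₂(t)Uψ₁ = e^{-λ₁t}Uψ₁),
and the modulus operator |U| also intertwines the semigroups. -/
theorem stmt_16 {d : ℕ} (Ω₁ Ω₂ : Set (EuclideanSpace ℝ (Fin d)))
    (h₁o : IsOpen Ω₁) (h₂o : IsOpen Ω₂)
    (h₁c : IsConnected Ω₁) (h₂c : IsConnected Ω₂)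
    (h₁b : Bornology.IsBounded Ω₁) (h₂b : Bornology.IsBounded Ω₂)
    (S₁ : ℝ → Lp ℝ 2 (volume.restrict Ω₁) →L[ℝ] Lp ℝ 2 (volume.restrict Ω₁))
    (S₂ : ℝ → Lp ℝ 2 (volume.restrict Ω₂) →L[ℝ] Lp ℝ 2 (volume.restrict Ω₂))
    (hS₁0 : S₁ 0 = ContinuousLinearMap.id ℝ _)
    (hS₂0 : S₂ 0 = ContinuousLinearMap.id ℝ _)
    (hS₁sg : ∀ s ≥ (0:ℝ), ∀ t ≥ (0:ℝ), S₁ (s + t) = (S₁ s).comp (S₁ t))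
    (hS₂sg : ∀ s ≥ (0:ℝ), ∀ t ≥ (0:ℝ), S₂ (s + t) = (S₂ s).comp (S₂ t))
    (hS₁sa : ∀ t ≥ (0:ℝ), IsSelfAdjoint (S₁ t))
    (hS₂sa : ∀ t ≥ (0:ℝ), IsSelfAdjoint (S₂ t))
    (hS₁pos : ∀ t ≥ (0:ℝ), ∀ f, 0 ≤ f → 0 ≤ S₁ t f)
    (hS₂pos : ∀ t ≥ (0:ℝ), ∀ f, 0 ≤ f → 0 ≤ S₂ t f)
    (hS₁irr : ∀ V : Set (EuclideanSpace ℝ (Fin d)), MeasurableSet V →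
      (∀ t ≥ (0:ℝ), ∀ f : Lp ℝ 2 (volume.restrict Ω₁),
        (∀ᵐ x ∂(volume.restrict Ω₁), x ∈ V → f x = 0) →
        (∀ᵐ x ∂(volume.restrict Ω₁), x ∈ V → S₁ t f x = 0)) →
      volume.restrict Ω₁ V = 0 ∨ volume.restrict Ω₁ Vᶜ = 0)
    (hS₂irr : ∀ V : Set (EuclideanSpace ℝ (Fin d)), MeasurableSet V →
      (∀ t ≥ (0:ℝ), ∀ f : Lp ℝ 2 (volume.restrict Ω₂),
        (∀ᵐ x ∂(volume.restrict Ω₂), x ∈ V → f x = 0) →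
        (∀ᵐ x ∂(volume.restrict Ω₂), x ∈ V → S₂ t f x = 0)) →
      volume.restrict Ω₂ V = 0 ∨ volume.restrict Ω₂ Vᶜ = 0)
    (lam₁ : ℝ)
    (ψ₁ : Lp ℝ 2 (volume.restrict Ω₁)) (ψ₂ : Lp ℝ 2 (volume.restrict Ω₂))
    (hψ₁pos : ∀ᵐ x ∂(volume.restrict Ω₁), 0 < ψ₁ x)
    (hψ₂pos : ∀ᵐ x ∂(volume.restrict Ω₂), 0 < ψ₂ x)
    (hψ₁n : ‖ψ₁‖ = 1) (hψ₂n : ‖ψ₂‖ = 1)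
    (hψ₁eig : ∀ t ≥ (0:ℝ), S₁ t ψ₁ = Real.exp (-(lam₁ * t)) • ψ₁)
    (hψ₂eig : ∀ t ≥ (0:ℝ), S₂ t ψ₂ = Real.exp (-(lam₁ * t)) • ψ₂)
    (U : Lp ℝ 2 (volume.restrict Ω₁) →L[ℝ] Lp ℝ 2 (volume.restrict Ω₂))
    (hU0 : U ≠ 0)
    (hUdisj : ∀ f g : Lp ℝ 2 (volume.restrict Ω₁),
      |f| ⊓ |g| = 0 → |U f| ⊓ |U g| = 0)
    (hUint : ∀ t ≥ (0:ℝ), (S₂ t).comp U = U.comp (S₁ t))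
    (absU : Lp ℝ 2 (volume.restrict Ω₁) →L[ℝ] Lp ℝ 2 (volume.restrict Ω₂))
    (habsUpos : ∀ f, 0 ≤ f → 0 ≤ absU f)
    (habsU : ∀ f, 0 ≤ f → absU f = |U f|) :
    (U ψ₁ ≠ 0 ∧
      ∀ t ≥ (0:ℝ), S₂ t (U ψ₁) = Real.exp (-(lam₁ * t)) • U ψ₁) ∧
    ∀ t ≥ (0:ℝ), absU.comp (S₁ t) = (S₂ t).comp absU := by
  have hψ₁nn : 0 ≤ ψ₁ := (Lp.coeFn_nonneg ψ₁).1 (hψ₁pos.mono fun x hx => hx.le)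
  have heig : ∀ t ≥ (0:ℝ), S₂ t (U ψ₁) = Real.exp (-(lam₁ * t)) • U ψ₁ := by
    intro t ht
    have h2 := congrFun (congrArg DFunLike.coe (hUint t ht)) ψ₁
    simp only [ContinuousLinearMap.coe_comp', Function.comp_apply] at h2
    rw [h2, hψ₁eig t ht, U.map_smul]
  have hUψ : U ψ₁ ≠ 0 := by
    intro h0
    have habsψ : absU ψ₁ = 0 := by rw [habsU ψ₁ hψ₁nn, h0, abs_zero]
    have habs0 : absU = 0 := kill_pos_op absU habsUpos ψ₁ hψ₁pos habsψ
    apply hU0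
    have hpos : ∀ g, 0 ≤ g → U g = 0 := by
      intro g hg
      have h1 : |U g| = 0 := by
        rw [← habsU g hg, habs0]; simp
      have h2 : U g ≤ 0 := h1 ▸ le_abs_self (U g)
      have h3 : -(U g) ≤ 0 := h1 ▸ neg_le_abs (U g)
      exact le_antisymm h2 (neg_nonpos.mp h3)
    refine ContinuousLinearMap.ext fun f => ?_
    calc U f = U (f⁺ - f⁻) := by rw [posPart_sub_negPart]
    _ = U f⁺ - U f⁻ := map_sub _ _ _
    _ = 0 := by
        rw [hpos _ (posPart_nonneg f), hpos _ (negPart_nonneg f), sub_zero]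
  refine ⟨⟨hUψ, heig⟩, ?_⟩
  intro t ht
  set e := Real.exp (-(lam₁ * t)) with he
  have hepos : 0 < e := Real.exp_pos _
  have hS2pos := hS₂pos t ht
  have key : S₂ t |U ψ₁| = e • |U ψ₁| := by
    set v := S₂ t |U ψ₁| - e • |U ψ₁| with hv
    have hvpos : 0 ≤ v := by
      rw [hv, sub_nonneg]
      calc e • |U ψ₁| = |e • U ψ₁| := (lp_abs_smul e hepos.le _).symm
      _ = |S₂ t (U ψ₁)| := by rw [heig t ht]
      _ ≤ S₂ t |U ψ₁| := abs_map_le (S₂ t) hS2pos (U ψ₁)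
    have hsa : ContinuousLinearMap.adjoint (S₂ t) = S₂ t := by
      have := hS₂sa t ht
      rwa [IsSelfAdjoint, ContinuousLinearMap.star_eq_adjoint] at this
    have hinner : ⟪v, ψ₂⟫ = (0:ℝ) := by
      rw [hv, inner_sub_left]
      have h1 : ⟪S₂ t |U ψ₁|, ψ₂⟫ = ⟪|U ψ₁|, S₂ t ψ₂⟫ := by
        conv_rhs => rw [← hsa]
        rw [ContinuousLinearMap.adjoint_inner_right]
      rw [h1, hψ₂eig t ht, real_inner_smul_right, real_inner_smul_left]
      ring
    have hv0 := lp_eq_zero_of_inner_eq_zero v ψ₂ hvpos hψ₂pos hinner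
    rw [hv, sub_eq_zero] at hv0
    exact hv0
  set R := (S₂ t).comp absU - absU.comp (S₁ t) with hR
  have hRapp : ∀ f, R f = S₂ t (absU f) - absU (S₁ t f) := fun f => rfl
  have hRpos : ∀ f, 0 ≤ f → 0 ≤ R f := by
    intro f hf
    rw [hRapp, habsU f hf, habsU _ (hS₁pos t ht f hf), sub_nonneg]
    have hcomm : U (S₁ t f) = S₂ t (U f) := by
      have h2 := congrFun (congrArg DFunLike.coe (hUint t ht)) f
      simp only [ContinuousLinearMap.coe_comp', Function.comp_apply] at h2
      exact h2.symm
    rw [hcomm]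
    exact abs_map_le (S₂ t) hS2pos (U f)
  have hRψ : R ψ₁ = 0 := by
    rw [hRapp, habsU ψ₁ hψ₁nn, hψ₁eig t ht, absU.map_smul, habsU ψ₁ hψ₁nn, ← he, key, sub_self]
  have hR0 : R = 0 := kill_pos_op R hRpos ψ₁ hψ₁pos hRψ
  rw [hR, sub_eq_zero] at hR0
  exact hR0.symm
end

section
/- Let Ω₁, Ω₂ ⊆ ℝ^d be open, τ : ℝ^d → ℝ^d a Euclidean isometry with τ(Ω₂) = Ω₁, c > 0, and U : L²(Ω₁) → L²(Ω₂) a bounded linear operator such that the lattice identity |Uf| = c·|f ∘ τ| holds almost everywhere for every f ∈ L²(Ω₁). Then there exists h ∈ L^∞(Ω₂) with |h| = c a.e. such that Uf = h·(f ∘ τ) a.e. for all f ∈ L²(Ω₁). -/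
open MeasureTheory Complex

set_option maxHeartbeats 1000000 in
lemma zaanen_key (c : ℝ) (hc : 0 < c) (a b u v : ℂ) (hu : u ≠ 0)
    (h1 : ‖a‖ = c * ‖u‖) (h2 : ‖b‖ = c * ‖v‖)
    (h3 : ‖a + b‖ = c * ‖u + v‖)
    (h4 : ‖a + Complex.I * b‖ = c * ‖u + Complex.I * v‖) :
    b = a / u * v := by
  have sq : ∀ z w : ℂ, ‖z‖ = c * ‖w‖ → Complex.normSq z = c ^ 2 * Complex.normSq w := by
    intro z w hzw
    have := congrArg (· ^ 2) hzw
    simpa [mul_pow, Complex.sq_norm] using this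
  have H1 := sq _ _ h1
  have H2 := sq _ _ h2
  have H3 := sq _ _ h3
  have H4 := sq _ _ h4
  simp only [Complex.normSq_apply, Complex.add_re, Complex.add_im, Complex.mul_re,
    Complex.mul_im, Complex.I_re, Complex.I_im] at H1 H2 H3 H4
  ring_nf at H1 H2 H3 H4
  have E3 : a.re * b.re + a.im * b.im = c ^ 2 * (u.re * v.re + u.im * v.im) := by
    nlinarith [H1, H2, H3]
  have E4 : a.re * b.im - a.im * b.re = c ^ 2 * (u.re * v.im - u.im * v.re) := by
    nlinarith [H1, H2, H4]
  have key : (starRingEnd ℂ) a * b = ((c ^ 2 : ℝ) : ℂ) * ((starRingEnd ℂ) u * v) := by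
    apply Complex.ext <;>
      simp only [Complex.mul_re, Complex.mul_im, Complex.conj_re, Complex.conj_im,
        Complex.ofReal_re, Complex.ofReal_im] <;> ring_nf <;> linarith only [E3, E4]
  have habs : a * (starRingEnd ℂ) a = ((c ^ 2 : ℝ) : ℂ) * (u * (starRingEnd ℂ) u) := by
    rw [Complex.mul_conj, Complex.mul_conj]
    rw [show Complex.normSq a = c ^ 2 * Complex.normSq u by
      simp only [Complex.normSq_apply]; linarith [H1]]
    push_cast
    ring
  have hcu : (((c ^ 2 : ℝ) : ℂ)) * (starRingEnd ℂ) u ≠ 0 := by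
    apply mul_ne_zero
    · exact_mod_cast pow_ne_zero 2 hc.ne'
    · simpa using hu
  have h7 : (((c ^ 2 : ℝ) : ℂ)) * (starRingEnd ℂ) u * (u * b - a * v) = 0 := by
    linear_combination a * key - b * habs
  have h8 : u * b = a * v := by
    rcases mul_eq_zero.mp h7 with h | h
    · exact absurd h hcu
    · exact sub_eq_zero.mp h
  field_simp
  linear_combination h8

set_option maxHeartbeats 2000000 in
/-- Zaanen's theorem applied: if τ is a Euclidean isometry with τ(Ω₂) = Ω₁,
c > 0, and U : L²(Ω₁) → L²(Ω₂) is bounded linear with |Uf| = c·|f∘τ| a.e.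
for all f, then Uf = h·(f∘τ) for an L^∞ multiplier h of constant modulus c. -/
theorem stmt_18 {d : ℕ} (Ω₁ Ω₂ : Set (EuclideanSpace ℝ (Fin d)))
    (h₁ : IsOpen Ω₁) (h₂ : IsOpen Ω₂)
    (τ : EuclideanSpace ℝ (Fin d) ≃ᵢ EuclideanSpace ℝ (Fin d))
    (hτ : τ '' Ω₂ = Ω₁) (c : ℝ) (hc : 0 < c)
    (U : Lp ℂ 2 (volume.restrict Ω₁) →L[ℂ] Lp ℂ 2 (volume.restrict Ω₂))
    (hU : ∀ f : Lp ℂ 2 (volume.restrict Ω₁),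
      ∀ᵐ y ∂(volume.restrict Ω₂), ‖U f y‖ = c * ‖f (τ y)‖) :
    ∃ h : EuclideanSpace ℝ (Fin d) → ℂ,
      AEStronglyMeasurable h (volume.restrict Ω₂) ∧
      (∀ᵐ y ∂(volume.restrict Ω₂), ‖h y‖ = c) ∧
      ∀ f : Lp ℂ 2 (volume.restrict Ω₁),
        ∀ᵐ y ∂(volume.restrict Ω₂), U f y = h y * f (τ y) := by
  classical
  -- the Gaussian, a nonvanishing L² function
  set g : EuclideanSpace ℝ (Fin d) → ℂ := fun x => Complex.exp (-(‖x‖ : ℂ) ^ 2) with hg_def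
  have hgne : ∀ x, g x ≠ 0 := fun x => Complex.exp_ne_zero _
  have hgc : Continuous g := by
    apply Complex.continuous_exp.comp
    continuity
  have hgmeas : AEStronglyMeasurable g (volume : Measure (EuclideanSpace ℝ (Fin d))) :=
    hgc.aestronglyMeasurable
  have hInt2 : Integrable
      (fun x : EuclideanSpace ℝ (Fin d) => Complex.exp (-(2 : ℂ) * (‖x‖ : ℂ) ^ 2)) volume := by
    have := GaussianFourier.integrable_cexp_neg_mul_sq_norm_add_of_euclideanSpace
      (b := (2 : ℂ)) (by norm_num) 0 (0 : EuclideanSpace ℝ (Fin d))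
    simpa using this
  have hg2 : MemLp g 2 (volume : Measure (EuclideanSpace ℝ (Fin d))) := by
    rw [memLp_two_iff_integrable_sq_norm hgmeas]
    have heq : (fun x : EuclideanSpace ℝ (Fin d) => ‖g x‖ ^ 2)
        = fun x => ‖Complex.exp (-(2 : ℂ) * (‖x‖ : ℂ) ^ 2)‖ := by
      funext x
      rw [hg_def]
      simp only [Complex.norm_exp]
      rw [← Real.exp_nat_mul]
      congr 1
      simp [Complex.mul_re]
    rw [heq]
    exact hInt2.norm
  set f₀ : Lp ℂ 2 (volume.restrict Ω₁) := (hg2.restrict Ω₁).toLp g with hf₀def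
  have hf₀ : ⇑f₀ =ᵐ[volume.restrict Ω₁] g := MemLp.coeFn_toLp _
  -- τ is measure preserving
  have hmp : MeasurePreserving (⇑τ) volume volume := by
    have hL := τ.toRealLinearIsometryEquiv.measurePreserving
    have hτeq : ⇑τ = (fun x => x + τ 0) ∘ ⇑τ.toRealLinearIsometryEquiv := by
      funext x
      simp [IsometryEquiv.toRealLinearIsometryEquiv_apply]
    rw [hτeq]
    exact (measurePreserving_add_right volume (τ 0)).comp hL
  have hpre : ⇑τ ⁻¹' Ω₁ = Ω₂ := by
    rw [← hτ, Set.preimage_image_eq _ τ.injective]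
  have hmap : Measure.map (⇑τ) (volume.restrict Ω₂) = volume.restrict Ω₁ := by
    have h := Measure.restrict_map (μ := volume) hmp.measurable h₁.measurableSet
    rw [hmp.map_eq, hpre] at h
    exact h.symm
  have htrans : ∀ {P : EuclideanSpace ℝ (Fin d) → Prop},
      (∀ᵐ x ∂(volume.restrict Ω₁), P x) → ∀ᵐ y ∂(volume.restrict Ω₂), P (τ y) := by
    intro P hP
    refine ae_of_ae_map hmp.measurable.aemeasurable ?_
    rw [hmap]
    exact hP
  refine ⟨fun y => U f₀ y * (g (τ y))⁻¹, ?_, ?_, ?_⟩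
  · exact (Lp.aestronglyMeasurable (U f₀)).mul
      ((hgc.comp τ.continuous).inv₀ (fun y => hgne _)).aestronglyMeasurable
  · filter_upwards [hU f₀, htrans hf₀] with y A1 T0
    rw [norm_mul, norm_inv, A1, T0, mul_assoc,
      mul_inv_cancel₀ (norm_ne_zero_iff.mpr (hgne (τ y))), mul_one]
  · intro f
    have hsum : ⇑(U (f₀ + f)) =ᵐ[volume.restrict Ω₂] fun y => U f₀ y + U f y := by
      rw [map_add]
      exact Lp.coeFn_add _ _
    have hsum' : ⇑(U (f₀ + Complex.I • f)) =ᵐ[volume.restrict Ω₂]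
        fun y => U f₀ y + Complex.I * U f y := by
      rw [map_add, U.map_smul]
      filter_upwards [Lp.coeFn_add (U f₀) (Complex.I • U f),
        Lp.coeFn_smul Complex.I (U f)] with y hy1 hy2
      rw [hy1]
      simp [hy2, smul_eq_mul]
    have harg : ⇑(f₀ + f) =ᵐ[volume.restrict Ω₁] fun x => g x + f x := by
      filter_upwards [Lp.coeFn_add f₀ f, hf₀] with x hx1 hx2
      rw [hx1]
      simp [hx2]
    have harg' : ⇑(f₀ + Complex.I • f) =ᵐ[volume.restrict Ω₁]
        fun x => g x + Complex.I * f x := by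
      filter_upwards [Lp.coeFn_add f₀ (Complex.I • f), Lp.coeFn_smul Complex.I f, hf₀]
        with x hx1 hx2 hx3
      rw [hx1]
      simp [hx2, hx3, smul_eq_mul]
    filter_upwards [hU f₀, hU f, hU (f₀ + f), hU (f₀ + Complex.I • f), hsum, hsum',
      htrans hf₀, htrans harg, htrans harg'] with y A1 A2 A3 A4 S1 S2 T0 T1 T2
    rw [S1, T1] at A3
    rw [S2, T2] at A4
    rw [T0] at A1
    rw [← div_eq_mul_inv]
    exact zaanen_key c hc (U f₀ y) (U f y) (g (τ y)) (f (τ y)) (hgne (τ y)) A1 A2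
      (by simpa using A3) (by simpa using A4)
end
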